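/- arXiv:1411.5661 — 5 statements merged into one kernel-verified Lean document; each statement's English description precedes it below -/
import Mathlib

section
/- Let α be an interval t-coloring of the complete graph K_{2n}. Then for every integer c, the number of vertices v of K_{2n} whose smallest incident color min S(v,α) equals c is even. (In particular, listing the values min S(v,α) over all 2n vertices in nondecreasing order as m_1 ≤ m_2 ≤ … ≤ m_{2n}, one has m_{2i-1} = m_{2i} for every i = 1,…,n.) -/
/-- An interval `t`-coloring of the complete graph on `Fin m`:
a proper edge-coloring with colors in `{1,…,t}`, using every color,
such that the spectrum (set of colors incident to each vertex) is an
interval of consecutive integers. -/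
def IsIntervalColoring (m t : ℕ) (c : Sym2 (Fin m) → ℕ) : Prop :=
  (∀ u v w : Fin m, u ≠ v → u ≠ w → v ≠ w → c s(u, v) ≠ c s(u, w)) ∧
  (∀ u v : Fin m, u ≠ v → c s(u, v) ∈ Finset.Icc 1 t) ∧
  (∀ k : ℕ, 1 ≤ k → k ≤ t → ∃ u v : Fin m, u ≠ v ∧ c s(u, v) = k) ∧
  (∀ v : Fin m, ∃ a b : ℕ,
    {k : ℕ | ∃ u : Fin m, u ≠ v ∧ c s(u, v) = k} = Set.Icc a b)

/-- `W m` is the greatest `t` for which the complete graph on `m` vertices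
has an interval `t`-coloring. -/
noncomputable def W (m : ℕ) : ℕ :=
  sSup {t : ℕ | ∃ c : Sym2 (Fin m) → ℕ, IsIntervalColoring m t c}

/-- The smallest color on an edge incident to `v`. -/
noncomputable def minColor (m : ℕ) (c : Sym2 (Fin m) → ℕ) (v : Fin m) : ℕ :=
  sInf {k : ℕ | ∃ u : Fin m, u ≠ v ∧ c s(u, v) = k}

/-- The list `m_1 ≤ m_2 ≤ … ≤ m_{2n}` of smallest incident colors of the
vertices, in nondecreasing order. -/
noncomputable def sortedMins (m : ℕ) (c : Sym2 (Fin m) → ℕ) : List ℕ :=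
  ((Finset.univ : Finset (Fin m)).val.map (minColor m c)).sort (· ≤ ·)

/-- The `i`-th entry `b_i = m_{2i+1} - m_{2i-1}` of the shift vector of a
coloring of `K_{2n}` (1-based positions; `m_j` is the `j`-th sorted smallest
incident color). Meaningful for `1 ≤ i ≤ n-1`. -/
noncomputable def shiftVec (n : ℕ) (c : Sym2 (Fin (2 * n)) → ℕ) (i : ℕ) : ℕ :=
  (sortedMins (2 * n) c).getD (2 * i) 0 - (sortedMins (2 * n) c).getD (2 * i - 2) 0

lemma spec_lemma {m t : ℕ} {c : Sym2 (Fin m) → ℕ} (hc : IsIntervalColoring m t c)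
    (hm : 2 ≤ m) (v : Fin m) :
    ∃ a : ℕ, 1 ≤ a ∧
      {k : ℕ | ∃ u : Fin m, u ≠ v ∧ c s(u, v) = k} = Set.Icc a (a + (m - 2)) ∧
      minColor m c v = a := by
  obtain ⟨a, b, hab⟩ := hc.2.2.2 v
  have : 1 < Fintype.card (Fin m) := by simp only [Fintype.card_fin]; omega
  obtain ⟨u, hu⟩ := Fintype.exists_ne_of_one_lt_card this v
  have hne : Set.Nonempty (Set.Icc a b) := ⟨c s(u, v), by rw [← hab]; exact ⟨u, hu, rfl⟩⟩
  have hle : a ≤ b := by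
    rcases hne with ⟨x, hx⟩; exact le_trans hx.1 hx.2
  have ha1 : 1 ≤ a := by
    have : a ∈ Set.Icc a b := ⟨le_refl a, hle⟩
    rw [← hab] at this
    obtain ⟨u', hu', hcu⟩ := this
    have := hc.2.1 u' v hu'
    rw [hcu] at this
    exact (Finset.mem_Icc.mp this).1
  have hb : b = a + (m - 2) := by
    have hinj : Set.InjOn (fun u : Fin m => c s(u, v)) ((Finset.univ.erase v : Finset (Fin m)) : Set (Fin m)) := by
      intro u1 h1 u2 h2 heq
      simp only [Finset.coe_erase, Set.mem_diff, Set.mem_singleton_iff] at h1 h2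
      by_contra hne12
      exact hc.1 v u1 u2 (Ne.symm h1.2) (Ne.symm h2.2) hne12
        (by rw [Sym2.eq_swap, @Sym2.eq_swap _ v u2]; exact heq)
    have himg : (Finset.univ.erase v).image (fun u : Fin m => c s(u, v)) = Finset.Icc a b := by
      ext x
      simp only [Finset.mem_image, Finset.mem_erase, Finset.mem_univ, and_true,
        Finset.mem_Icc]
      constructor
      · rintro ⟨u', hu', rfl⟩
        have : c s(u', v) ∈ Set.Icc a b := by rw [← hab]; exact ⟨u', hu', rfl⟩
        exact this
      · intro hx
        have : x ∈ Set.Icc a b := hx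
        rw [← hab] at this
        obtain ⟨u', hu', hcu⟩ := this
        exact ⟨u', hu', hcu⟩
    have hcard : (Finset.Icc a b).card = m - 1 := by
      rw [← himg, Finset.card_image_of_injOn hinj, Finset.card_erase_of_mem (Finset.mem_univ v)]
      simp
    rw [Nat.card_Icc] at hcard
    omega
  have hmin : minColor m c v = a := by
    unfold minColor
    rw [hab]
    exact csInf_Icc hle
  exact ⟨a, ha1, by rw [hab, hb], hmin⟩

lemma handshake {m : ℕ} (c : Sym2 (Fin m) → ℕ) (k : ℕ) :
    Even (∑ v : Fin m, (Finset.univ.filter fun u => u ≠ v ∧ c s(u, v) ≤ k).card) := by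
  classical
  let G : SimpleGraph (Fin m) :=
    { Adj := fun u v => u ≠ v ∧ c s(u, v) ≤ k
      symm := by
        constructor; intro u v h
        exact ⟨h.1.symm, by rw [Sym2.eq_swap]; exact h.2⟩
      loopless := ⟨fun v h => h.1 rfl⟩ }
  haveI : DecidableRel G.Adj := Classical.decRel _
  have hdeg : ∀ v : Fin m, G.degree v
      = (Finset.univ.filter fun u => u ≠ v ∧ c s(u, v) ≤ k).card := by
    intro v
    rw [← SimpleGraph.card_neighborFinset_eq_degree]
    congr 1
    ext u
    simp only [SimpleGraph.mem_neighborFinset, Finset.mem_filter, Finset.mem_univ, true_and]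
    constructor
    · intro h; exact ⟨h.1.symm, by rw [Sym2.eq_swap]; exact h.2⟩
    · intro h; exact ⟨h.1.symm, by rw [Sym2.eq_swap]; exact h.2⟩
  have := SimpleGraph.sum_degrees_eq_twice_card_edges G
  simp only [hdeg] at this
  refine Nat.even_iff.mpr ?_
  have h3 : (2 * G.edgeFinset.card) % 2 = 0 := by simp
  convert h3 using 2
  convert this

/-- In an interval coloring of `K_{2n}`, for every color `k` the number of
vertices whose smallest incident color equals `k` is even. -/
theorem statement_13 (n t : ℕ) (c : Sym2 (Fin (2 * n)) → ℕ)
    (hc : IsIntervalColoring (2 * n) t c) (k : ℕ) :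
    Even ({v : Fin (2 * n) | minColor (2 * n) c v = k}.ncard) := by
  classical
  rcases Nat.eq_zero_or_pos n with hn0 | hn
  · have : ({v : Fin (2 * n) | minColor (2 * n) c v = k} : Set (Fin (2 * n))) = ∅ := by
      apply Set.eq_empty_of_forall_notMem
      intro v _
      have := v.2
      omega
    rw [this, Set.ncard_empty]
    exact Even.zero
  have hm : 2 ≤ 2 * n := by omega
  choose A hA1 hA2 hA3 using spec_lemma hc hm
  have overlap : ∀ {j : ℕ} (u : Fin (2 * n)) {v : Fin (2 * n)},
      A v ≤ j → j < A u → j ≤ A v + (2 * n - 2) := by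
    intro j u v hv hu
    have huv : u ≠ v := by intro h; rw [h] at hu; omega
    have hx : c s(u, v) ∈ {k : ℕ | ∃ w : Fin (2 * n), w ≠ v ∧ c s(w, v) = k} := ⟨u, huv, rfl⟩
    have hy : c s(u, v) ∈ {k : ℕ | ∃ w : Fin (2 * n), w ≠ u ∧ c s(w, u) = k} := by
      refine ⟨v, huv.symm, ?_⟩
      rw [Sym2.eq_swap]
    rw [hA2 v] at hx
    rw [hA2 u] at hy
    have := hx.2
    have := hy.1
    omega
  have countD : ∀ (v : Fin (2 * n)) (j : ℕ), A v ≤ j → j ≤ A v + (2 * n - 2) →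
      (Finset.univ.filter fun u => u ≠ v ∧ c s(u, v) ≤ j).card = j + 1 - A v := by
    intro v j hj1 hj2
    have hinj : Set.InjOn (fun u : Fin (2 * n) => c s(u, v))
        ((Finset.univ.filter fun u => u ≠ v ∧ c s(u, v) ≤ j : Finset (Fin (2 * n))) : Set (Fin (2 * n))) := by
      intro u1 h1 u2 h2 heq
      simp only [Finset.coe_filter, Set.mem_setOf_eq, Finset.mem_univ, true_and] at h1 h2
      by_contra hne12
      exact hc.1 v u1 u2 (Ne.symm h1.1) (Ne.symm h2.1) hne12
        (by rw [Sym2.eq_swap, @Sym2.eq_swap _ v u2]; exact heq)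
    have himg : (Finset.univ.filter fun u => u ≠ v ∧ c s(u, v) ≤ j).image
        (fun u : Fin (2 * n) => c s(u, v)) = Finset.Icc (A v) j := by
      ext x
      simp only [Finset.mem_image, Finset.mem_filter, Finset.mem_univ, true_and,
        Finset.mem_Icc]
      constructor
      · rintro ⟨u', ⟨hu', hle'⟩, rfl⟩
        have : c s(u', v) ∈ Set.Icc (A v) (A v + (2 * n - 2)) := by
          rw [← hA2 v]; exact ⟨u', hu', rfl⟩
        exact ⟨this.1, hle'⟩
      · intro hx
        have : x ∈ Set.Icc (A v) (A v + (2 * n - 2)) := ⟨hx.1, le_trans hx.2 hj2⟩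
        rw [← hA2 v] at this
        obtain ⟨u', hu', hcu⟩ := this
        exact ⟨u', ⟨hu', by rw [hcu]; exact hx.2⟩, hcu⟩
    have := Finset.card_image_of_injOn hinj
    rw [himg, Nat.card_Icc] at this
    omega
  have emptyD : ∀ (v : Fin (2 * n)) (j : ℕ), j < A v →
      (Finset.univ.filter fun u => u ≠ v ∧ c s(u, v) ≤ j).card = 0 := by
    intro v j hj
    rw [Finset.card_eq_zero]
    rw [Finset.filter_eq_empty_iff]
    rintro u - ⟨hu, hle⟩
    have : c s(u, v) ∈ Set.Icc (A v) (A v + (2 * n - 2)) := by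
      rw [← hA2 v]; exact ⟨u, hu, rfl⟩
    have := this.1
    omega
  have evenN : ∀ j : ℕ, Even (Finset.univ.filter fun v : Fin (2 * n) => A v ≤ j).card := by
    intro j
    by_cases hall : ∀ v : Fin (2 * n), A v ≤ j
    · have : (Finset.univ.filter fun v : Fin (2 * n) => A v ≤ j) = Finset.univ := by
        rw [Finset.filter_eq_self]; intro v _; exact hall v
      rw [this, Finset.card_univ, Fintype.card_fin]
      exact ⟨n, by omega⟩
    push_neg at hall
    obtain ⟨w, hw⟩ := hall
    rcases Nat.eq_zero_or_pos j with hj0 | hj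
    · have : (Finset.univ.filter fun v : Fin (2 * n) => A v ≤ j) = ∅ := by
        rw [Finset.filter_eq_empty_iff]
        intro v _
        have := hA1 v
        omega
      rw [this, Finset.card_empty]
      exact Even.zero
    have hFj : (∑ v : Fin (2 * n), (Finset.univ.filter fun u => u ≠ v ∧ c s(u, v) ≤ j).card)
        = ∑ v : Fin (2 * n), (if A v ≤ j then j + 1 - A v else 0) := by
      apply Finset.sum_congr rfl
      intro v _
      by_cases hv : A v ≤ j
      · rw [if_pos hv, countD v j hv (overlap w hv (by omega))]
      · rw [if_neg hv, emptyD v j (by omega)]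
    have hFj' : (∑ v : Fin (2 * n), (Finset.univ.filter fun u => u ≠ v ∧ c s(u, v) ≤ (j-1)).card)
        = ∑ v : Fin (2 * n), (if A v ≤ j - 1 then j - A v else 0) := by
      apply Finset.sum_congr rfl
      intro v _
      by_cases hv : A v ≤ j - 1
      · have := countD v (j-1) hv (overlap w hv (by omega))
        rw [if_pos hv, this]
        omega
      · rw [if_neg hv, emptyD v (j-1) (by omega)]
    have hsplit : (∑ v : Fin (2 * n), (if A v ≤ j then j + 1 - A v else 0))
        = (∑ v : Fin (2 * n), (if A v ≤ j - 1 then j - A v else 0))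
          + (Finset.univ.filter fun v : Fin (2 * n) => A v ≤ j).card := by
      rw [Finset.card_filter, ← Finset.sum_add_distrib]
      apply Finset.sum_congr rfl
      intro v _
      have := hA1 v
      by_cases h1 : A v ≤ j - 1
      · rw [if_pos h1, if_pos (by omega : A v ≤ j), if_pos (by omega : A v ≤ j)]
        omega
      · by_cases h2 : A v ≤ j
        · rw [if_neg h1, if_pos h2, if_pos h2]
          omega
        · rw [if_neg h1, if_neg h2, if_neg h2]
    have e1 := handshake c j
    have e2 := handshake c (j - 1)
    rw [hFj, hsplit] at e1
    rw [hFj'] at e2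
    exact (Nat.even_add.mp e1).mp e2
  have hset : {v : Fin (2 * n) | minColor (2 * n) c v = k}
      = ↑(Finset.univ.filter fun v : Fin (2 * n) => A v = k) := by
    ext v
    simp only [Set.mem_setOf_eq, Finset.coe_filter, Finset.mem_univ, true_and, hA3 v]
  rw [hset, Set.ncard_coe_finset]
  rcases Nat.eq_zero_or_pos k with hk0 | hk
  · have : (Finset.univ.filter fun v : Fin (2 * n) => A v = k) = ∅ := by
      rw [Finset.filter_eq_empty_iff]
      intro v _
      have := hA1 v
      omega
    rw [this, Finset.card_empty]
    exact Even.zero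
  have hNsplit : (Finset.univ.filter fun v : Fin (2 * n) => A v ≤ k).card
      = (Finset.univ.filter fun v : Fin (2 * n) => A v ≤ k - 1).card
        + (Finset.univ.filter fun v : Fin (2 * n) => A v = k).card := by
    rw [Finset.card_filter, Finset.card_filter, Finset.card_filter, ← Finset.sum_add_distrib]
    apply Finset.sum_congr rfl
    intro v _
    by_cases h1 : A v ≤ k - 1
    · rw [if_pos h1, if_pos (by omega : A v ≤ k), if_neg (by omega : ¬ A v = k)]
    · by_cases h2 : A v = k
      · rw [if_pos h2, if_pos (by omega : A v ≤ k), if_neg h1]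
      · rw [if_neg h1, if_neg h2, if_neg (by omega : ¬ A v ≤ k)]
  have e1 := evenN k
  have e2 := evenN (k - 1)
  rw [hNsplit] at e1
  exact (Nat.even_add.mp e1).mp e2
end

section
/- Let α be an interval t-coloring of K_{2n} with shift vector (b_1, b_2, …, b_{n-1}). Then for every k with 1 ≤ k ≤ n-1, b_1 + b_2 + … + b_k ≤ 2k - 1. -/
private lemma sorted_getD_mono {L : List ℕ} (hL : L.Pairwise (· ≤ ·)) {i j : ℕ}
    (hij : i ≤ j) (hj : j < L.length) : L.getD i 0 ≤ L.getD j 0 := by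
  have hi : i < L.length := lt_of_le_of_lt hij hj
  rw [List.getD_eq_getElem L 0 hi, List.getD_eq_getElem L 0 hj]
  have := hL.rel_get_of_le (a := ⟨i, hi⟩) (b := ⟨j, hj⟩) (Fin.mk_le_mk.mpr hij)
  simpa using this

private lemma getD_le_of_lt_countP : ∀ (L : List ℕ), L.Pairwise (· ≤ ·) → ∀ (x j : ℕ),
    j < L.countP (fun b => decide (b ≤ x)) → L.getD j 0 ≤ x := by
  intro L
  induction L with
  | nil => intro _ x j h; simp at h
  | cons a L ih =>
    intro hs x j h
    by_cases hax : a ≤ x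
    · cases j with
      | zero => simpa using hax
      | succ j =>
        rw [List.countP_cons] at h
        refine ih hs.of_cons x j ?_
        simp only [hax, decide_eq_true_eq, if_pos] at h
        omega
    · exfalso
      have h0 : (a :: L).countP (fun b => decide (b ≤ x)) = 0 := by
        rw [List.countP_eq_zero]
        intro b hb
        rcases List.mem_cons.mp hb with rfl | hb
        · simpa using hax
        · have : a ≤ b := (List.pairwise_cons.mp hs).1 b hb
          simp only [decide_eq_true_eq]; omega
      omega

private lemma telescope (L : List ℕ) (hL : L.Pairwise (· ≤ ·)) :
    ∀ k, 1 ≤ k → 2 * k < L.length →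
      ∑ i ∈ Finset.Icc 1 k, (L.getD (2 * i) 0 - L.getD (2 * i - 2) 0)
        ≤ L.getD (2 * k) 0 - L.getD 0 0 := by
  intro k
  induction k with
  | zero => omega
  | succ k ih =>
    intro _ hlen
    rcases Nat.eq_or_lt_of_le (Nat.one_le_iff_ne_zero.mpr (Nat.succ_ne_zero k)) with h1 | h1
    · have hk0 : k = 0 := by omega
      subst hk0
      simp
    · have hk1 : 1 ≤ k := by omega
      have hlen' : 2 * k < L.length := by omega
      rw [Finset.sum_Icc_succ_top (by omega : 1 ≤ k + 1)]
      have e1 : 2 * (k + 1) - 2 = 2 * k := by omega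
      rw [e1]
      have m1 : L.getD 0 0 ≤ L.getD (2 * k) 0 := sorted_getD_mono hL (by omega) hlen'
      have m2 : L.getD (2 * k) 0 ≤ L.getD (2 * (k + 1)) 0 :=
        sorted_getD_mono hL (by omega) hlen
      have := ih hk1 hlen'
      omega


/-- `b_1 + ⋯ + b_k ≤ 2k - 1` for every `1 ≤ k ≤ n-1`, where `(b_i)` is the
shift vector of an interval coloring of `K_{2n}`. -/
theorem statement_14 (n t : ℕ) (c : Sym2 (Fin (2 * n)) → ℕ)
    (hc : IsIntervalColoring (2 * n) t c) :
    ∀ k : ℕ, 1 ≤ k → k ≤ n - 1 →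
      ∑ i ∈ Finset.Icc 1 k, shiftVec n c i ≤ 2 * k - 1 := by
  classical
  obtain ⟨hprop, hmem, hused, hspec⟩ := hc
  intro k hk1 hkn
  have hn2 : 2 ≤ n := by omega
  -- t ≥ 1
  have hv01 : (⟨0, by omega⟩ : Fin (2 * n)) ≠ ⟨1, by omega⟩ := by
    simp [Fin.ext_iff]
  have ht1 : 1 ≤ t := by
    have := hmem _ _ hv01
    simp only [Finset.mem_Icc] at this
    omega
  obtain ⟨u0, v, huv, hcol1⟩ := hused 1 le_rfl ht1
  -- min colors are positive
  have hminpos : ∀ w : Fin (2 * n), 1 ≤ minColor (2 * n) c w := by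
    intro w
    obtain ⟨u, hu⟩ := Fintype.exists_ne_of_one_lt_card (by simp; omega) w
    have hne : {j : ℕ | ∃ u' : Fin (2 * n), u' ≠ w ∧ c s(u', w) = j}.Nonempty :=
      ⟨c s(u, w), u, hu, rfl⟩
    obtain ⟨u', hu', hcu'⟩ := Nat.sInf_mem hne
    have h2 := hmem u' w hu'
    simp only [Finset.mem_Icc] at h2
    unfold minColor
    omega
  -- spectrum of v
  obtain ⟨a, b, hab⟩ := hspec v
  have h1spec : (1 : ℕ) ∈ {j : ℕ | ∃ u : Fin (2 * n), u ≠ v ∧ c s(u, v) = j} :=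
    ⟨u0, huv, hcol1⟩
  rw [hab] at h1spec
  obtain ⟨ha1, hb1⟩ := Set.mem_Icc.mp h1spec
  have ha : a = 1 := by
    rcases Nat.lt_or_ge a 1 with h | h
    · exfalso
      have h0 : (0 : ℕ) ∈ Set.Icc a b := Set.mem_Icc.mpr ⟨by omega, by omega⟩
      rw [← hab] at h0
      obtain ⟨u', hu', hc0⟩ := h0
      have := hmem u' v hu'
      simp only [Finset.mem_Icc] at this
      omega
    · omega
  subst ha
  -- b ≥ 2n - 1
  have hinj : Set.InjOn (fun u => c s(u, v)) (Finset.univ.erase v : Finset (Fin (2 * n))) := by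
    intro u1 h1 u2 h2 heq
    by_contra hne
    have h1' : u1 ≠ v := Finset.ne_of_mem_erase (Finset.mem_coe.mp h1)
    have h2' : u2 ≠ v := Finset.ne_of_mem_erase (Finset.mem_coe.mp h2)
    have hp := hprop v u1 u2 (Ne.symm h1') (Ne.symm h2') hne
    rw [Sym2.eq_swap (a := v) (b := u1), Sym2.eq_swap (a := v) (b := u2)] at hp
    exact hp heq
  have hbig : 2 * n - 1 ≤ b := by
    have himg : (Finset.univ.erase v).image (fun u => c s(u, v)) ⊆ Finset.Icc 1 b := by
      intro j hj
      obtain ⟨u', hu', rfl⟩ := Finset.mem_image.mp hj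
      have hu'v : u' ≠ v := Finset.ne_of_mem_erase hu'
      have : c s(u', v) ∈ Set.Icc 1 b := by
        rw [← hab]; exact ⟨u', hu'v, rfl⟩
      simpa [Finset.mem_Icc] using this
    have hcard := Finset.card_le_card himg
    rw [Finset.card_image_of_injOn hinj, Finset.card_erase_of_mem (Finset.mem_univ v),
      Finset.card_univ, Fintype.card_fin, Nat.card_Icc] at hcard
    omega
  -- choose neighbors of v with colors 1..2k
  have hex : ∀ j : ℕ, ∃ u' : Fin (2 * n), (1 ≤ j ∧ j ≤ 2 * k) → (u' ≠ v ∧ c s(u', v) = j) := by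
    intro j
    by_cases hj : 1 ≤ j ∧ j ≤ 2 * k
    · have hjb : j ∈ Set.Icc 1 b := ⟨hj.1, by omega⟩
      rw [← hab] at hjb
      obtain ⟨u', h1, h2⟩ := hjb
      exact ⟨u', fun _ => ⟨h1, h2⟩⟩
    · exact ⟨v, fun h => absurd h hj⟩
  choose g hg using hex
  set T : Finset (Fin (2 * n)) := insert v ((Finset.Icc 1 (2 * k)).image g) with hT
  have hginj : Set.InjOn g (Finset.Icc 1 (2 * k) : Finset ℕ) := by
    intro j1 h1 j2 h2 he
    simp only [Finset.coe_Icc, Set.mem_Icc] at h1 h2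
    have e1 := (hg j1 h1).2
    have e2 := (hg j2 h2).2
    rw [he] at e1
    omega
  have hvni : v ∉ (Finset.Icc 1 (2 * k)).image g := by
    intro hv
    obtain ⟨j, hj, he⟩ := Finset.mem_image.mp hv
    simp only [Finset.mem_Icc] at hj
    exact (hg j hj).1 he
  have hTcard : T.card = 2 * k + 1 := by
    rw [hT, Finset.card_insert_of_notMem hvni, Finset.card_image_of_injOn hginj, Nat.card_Icc]
    omega
  have hTmin : ∀ w ∈ T, minColor (2 * n) c w ≤ 2 * k := by
    intro w hw
    rw [hT, Finset.mem_insert] at hw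
    rcases hw with rfl | hw
    · have h1 : minColor (2 * n) c w ≤ 1 := Nat.sInf_le ⟨u0, huv, hcol1⟩
      omega
    · obtain ⟨j, hj, rfl⟩ := Finset.mem_image.mp hw
      simp only [Finset.mem_Icc] at hj
      obtain ⟨hne, hcj⟩ := hg j hj
      have h1 : minColor (2 * n) c (g j) ≤ j :=
        Nat.sInf_le ⟨v, Ne.symm hne, by rw [Sym2.eq_swap]; exact hcj⟩
      omega
  -- sorted list facts
  set L := sortedMins (2 * n) c with hLdef
  have hsorted : L.Pairwise (· ≤ ·) := Multiset.pairwise_sort _ _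
  have hlen : L.length = 2 * n := by
    rw [hLdef, sortedMins, Multiset.length_sort, Multiset.card_map]
    simp
  have hcount : 2 * k < L.countP (fun x => decide (x ≤ 2 * k)) := by
    have h1 : Multiset.countP (fun x => x ≤ 2 * k)
        ((Finset.univ : Finset (Fin (2 * n))).val.map (minColor (2 * n) c))
        = (Finset.univ.filter (fun w => minColor (2 * n) c w ≤ 2 * k)).card := by
      rw [Multiset.countP_map]
      rfl
    have hsub : T ⊆ Finset.univ.filter (fun w => minColor (2 * n) c w ≤ 2 * k) := by
      intro w hw
      simp only [Finset.mem_filter, Finset.mem_univ, true_and]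
      exact hTmin w hw
    have h2 := Finset.card_le_card hsub
    have h3 : L.countP (fun x => decide (x ≤ 2 * k)) = Multiset.countP (fun x => x ≤ 2 * k)
        ((Finset.univ : Finset (Fin (2 * n))).val.map (minColor (2 * n) c)) := by
      conv_rhs => rw [← Multiset.sort_eq
        ((Finset.univ : Finset (Fin (2 * n))).val.map (minColor (2 * n) c)) (· ≤ ·)]
      rw [Multiset.coe_countP]
      rfl
    omega
  have hgetD : L.getD (2 * k) 0 ≤ 2 * k := getD_le_of_lt_countP L hsorted (2 * k) (2 * k) hcount
  have hgetD0 : 1 ≤ L.getD 0 0 := by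
    have hlen0 : 0 < L.length := by omega
    have hm : L.getD 0 0 ∈ L := by
      rw [List.getD_eq_getElem L 0 hlen0]
      exact List.getElem_mem _
    rw [hLdef, sortedMins, Multiset.mem_sort] at hm
    obtain ⟨w, _, hw⟩ := Multiset.mem_map.mp hm
    rw [hLdef, sortedMins, ← hw]
    exact hminpos w
  have htel := telescope L hsorted k hk1 (by omega)
  have hsum : ∑ i ∈ Finset.Icc 1 k, shiftVec n c i
      = ∑ i ∈ Finset.Icc 1 k, (L.getD (2 * i) 0 - L.getD (2 * i - 2) 0) := by
    simp only [shiftVec, ← hLdef]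
  omega
end

section
/- Let α be an interval t-coloring of K_{2n} with shift vector (b_1, b_2, …, b_{n-1}). Then for every k with 2 ≤ k ≤ n-2, k(2k-1) ≥ Σ_{i=1}^{k} i·b_i + Σ_{i=k+1}^{min(2k-1, n-1)} (2k-i)·b_i. -/
section AuxShiftVector



/-- A finset admitting a fixed-point-free involution has even cardinality. -/
lemma even_card_invol {β : Type*} [DecidableEq β] :
    ∀ (A : Finset β) (φ : β → β), (∀ v ∈ A, φ v ∈ A) → (∀ v ∈ A, φ (φ v) = v) →
      (∀ v ∈ A, φ v ≠ v) → Even A.card := by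
  intro A
  induction A using Finset.strongInduction with
  | _ A ih =>
    intro φ h1 h2 h3
    rcases A.eq_empty_or_nonempty with rfl | ⟨v, hv⟩
    · simp
    · have hfv : φ v ∈ A := h1 v hv
      have hne : φ v ≠ v := h3 v hv
      have hsub : {v, φ v} ⊆ A := by
        intro w hw; rcases Finset.mem_insert.mp hw with rfl | hw
        · exact hv
        · rcases Finset.mem_singleton.mp hw; exact hfv
      have hpair : ({v, φ v} : Finset β).card = 2 := Finset.card_pair (Ne.symm hne)
      have hss : A \ {v, φ v} ⊂ A := by
        apply Finset.sdiff_ssubset hsub ⟨v, Finset.mem_insert_self _ _⟩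
      have hmem : ∀ w ∈ A \ {v, φ v}, w ∈ A ∧ w ≠ v ∧ w ≠ φ v := by
        intro w hw
        have := Finset.mem_sdiff.mp hw
        refine ⟨this.1, ?_, ?_⟩
        · intro h; exact this.2 (by simp [h])
        · intro h; exact this.2 (by simp [h])
      have hcard : (A \ {v, φ v}).card + 2 = A.card := by
        rw [Finset.card_sdiff_of_subset hsub, hpair]
        have := Finset.card_le_card hsub
        omega
      have hEven := ih (A \ {v, φ v}) hss φ
        (by
          intro w hw
          obtain ⟨hwA, hwv, hwfv⟩ := hmem w hw
          refine Finset.mem_sdiff.mpr ⟨h1 w hwA, ?_⟩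
          intro hmem2
          rcases Finset.mem_insert.mp hmem2 with h | h
          · exact hwfv (by rw [← h2 w hwA, h])
          · have h' := Finset.mem_singleton.mp h
            exact hwv (by rw [← h2 w hwA, h', h2 v hv])
        )
        (fun w hw => h2 w (hmem w hw).1)
        (fun w hw => h3 w (hmem w hw).1)
      obtain ⟨m, hm⟩ := hEven
      exact ⟨m + 1, by omega⟩

/-- Position vs count in a sorted list, part 1. -/
lemma sorted_pos_lt_count (L : List ℕ) (hs : L.Pairwise (· ≤ ·)) (j x : ℕ) (hj : j < L.length)
    (h : L.getD j 0 ≤ x) : j < L.countP (fun y => decide (y ≤ x)) := by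
  have hsplit : L.countP (fun y => decide (y ≤ x)) =
      (L.take (j+1)).countP (fun y => decide (y ≤ x)) +
      (L.drop (j+1)).countP (fun y => decide (y ≤ x)) := by
    conv_lhs => rw [← List.take_append_drop (j+1) L]
    exact List.countP_append
  have htake : (L.take (j+1)).countP (fun y => decide (y ≤ x)) = j + 1 := by
    have hlen : (L.take (j+1)).length = j + 1 := by
      rw [List.length_take]; omega
    have hall : ∀ y ∈ L.take (j+1), (fun y => decide (y ≤ x)) y = true := by
      intro y hy
      obtain ⟨i, hi, hiy⟩ := List.mem_iff_getElem.mp hy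
      have hi' : i < j + 1 := by rw [List.length_take] at hi; omega
      have hgi : i < L.length := by omega
      have heq : (L.take (j+1))[i] = L[i]'hgi := List.getElem_take ..
      have hle : L[i]'hgi ≤ L[j]'hj :=
        List.Pairwise.rel_get_of_le hs (a := ⟨i, hgi⟩) (b := ⟨j, hj⟩) (by exact Nat.lt_succ_iff.mp hi')
      rw [List.getD_eq_getElem L 0 hj] at h
      simp only [decide_eq_true_eq]
      rw [← hiy, heq]
      exact le_trans hle h
    rw [List.countP_eq_length.mpr hall, hlen]
  omega

/-- Position vs count in a sorted list, part 2. -/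
lemma sorted_count_le_pos (L : List ℕ) (hs : L.Pairwise (· ≤ ·)) (j x : ℕ) (hj : j < L.length)
    (h : j < L.countP (fun y => decide (y ≤ x))) : L.getD j 0 ≤ x := by
  by_contra hcon
  push_neg at hcon
  have hsplit : L.countP (fun y => decide (y ≤ x)) =
      (L.take j).countP (fun y => decide (y ≤ x)) +
      (L.drop j).countP (fun y => decide (y ≤ x)) := by
    conv_lhs => rw [← List.take_append_drop j L]
    exact List.countP_append
  have hdrop : (L.drop j).countP (fun y => decide (y ≤ x)) = 0 := by
    apply List.countP_eq_zero.mpr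
    intro y hy
    obtain ⟨i, hi, hiy⟩ := List.mem_iff_getElem.mp hy
    have hlen : (L.drop j).length = L.length - j := List.length_drop
    have hji : j + i < L.length := by omega
    have : (L.drop j)[i] = L[j + i]'hji := List.getElem_drop ..
    have hle : L[j]'hj ≤ L[j+i]'hji :=
      List.Pairwise.rel_get_of_le hs (a := ⟨j, hj⟩) (b := ⟨j+i, hji⟩) (by simp)
    rw [List.getD_eq_getElem L 0 hj] at hcon
    simp only [decide_eq_true_eq]
    rw [← hiy, this]
    omega
  have htake : (L.take j).countP (fun y => decide (y ≤ x)) ≤ j := by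
    calc (L.take j).countP (fun y => decide (y ≤ x)) ≤ (L.take j).length := List.countP_le_length
    _ ≤ j := by rw [List.length_take]; omega
  omega



/-- Uniqueness of the edge of a given color at a vertex. -/
lemma color_uniq {m t : ℕ} {c : Sym2 (Fin m) → ℕ} (hc : IsIntervalColoring m t c)
    {v u w : Fin m} {x : ℕ} (hu : u ≠ v) (hw : w ≠ v)
    (h1 : c s(u, v) = x) (h2 : c s(w, v) = x) : u = w := by
  by_contra hne
  apply hc.1 v u w (Ne.symm hu) (Ne.symm hw) hne
  rw [show s(v,u) = s(u,v) from Sym2.eq_swap, show s(v,w) = s(w,v) from Sym2.eq_swap, h1, h2]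

/-- Spectrum structure: it is exactly `[a v, a v + (2n-2)]` with `a v ≥ 1`. -/
lemma spec_struct {n t : ℕ} {c : Sym2 (Fin (2*n)) → ℕ} (hc : IsIntervalColoring (2*n) t c)
    (hn : 1 ≤ n) (v : Fin (2*n)) :
    1 ≤ minColor (2*n) c v ∧
    ∀ x : ℕ, (∃ u, u ≠ v ∧ c s(u, v) = x) ↔
      (minColor (2*n) c v ≤ x ∧ x ≤ minColor (2*n) c v + (2*n - 2)) := by
  obtain ⟨a₀, b₀, hab⟩ := hc.2.2.2 v
  set S : Set ℕ := {k : ℕ | ∃ u : Fin (2*n), u ≠ v ∧ c s(u, v) = k} with hSdef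
  have hrange : S = Set.range (fun u : {u : Fin (2*n) // u ≠ v} => c s(u.1, v)) := by
    ext x
    constructor
    · rintro ⟨u, hu, h⟩; exact ⟨⟨u, hu⟩, h⟩
    · rintro ⟨⟨u, hu⟩, h⟩; exact ⟨u, hu, h⟩
  have hinj : Function.Injective (fun u : {u : Fin (2*n) // u ≠ v} => c s(u.1, v)) := by
    rintro ⟨u, hu⟩ ⟨w, hw⟩ h
    simp only at h
    have := color_uniq hc hu hw h rfl
    exact Subtype.ext this
  have hcard : S.ncard = 2*n - 1 := by
    rw [hrange, ← Nat.card_coe_set_eq, Nat.card_range_of_injective hinj,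
      Nat.card_eq_fintype_card]
    have : (2*n : ℕ) = (2*n - 1) + 1 := by omega
    rw [Fintype.card_subtype_compl]
    simp
  have hcard2 : b₀ + 1 - a₀ = 2*n - 1 := by
    rw [← hcard, hab, ← Finset.coe_Icc, Set.ncard_coe_finset, Nat.card_Icc]
  have hab' : a₀ ≤ b₀ := by
    by_contra h
    push_neg at h
    have : (Set.Icc a₀ b₀).ncard = 0 := by
      rw [← Finset.coe_Icc, Set.ncard_coe_finset, Nat.card_Icc]; omega
    rw [hab, this] at hcard
    omega
  have hb₀ : b₀ = a₀ + (2*n - 2) := by omega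
  have hmin : minColor (2*n) c v = a₀ := by
    have h1 : a₀ ∈ S := by rw [hab]; exact Set.mem_Icc.mpr ⟨le_refl _, hab'⟩
    have hminS : minColor (2*n) c v = sInf S := rfl
    have h4 : sInf S ∈ Set.Icc a₀ b₀ := by rw [← hab]; exact Nat.sInf_mem ⟨a₀, h1⟩
    rw [hminS]
    exact le_antisymm (Nat.sInf_le h1) (Set.mem_Icc.mp h4).1
  constructor
  · rw [hmin]
    have h1 : a₀ ∈ S := by rw [hab]; exact Set.mem_Icc.mpr ⟨le_refl _, hab'⟩
    obtain ⟨u, hu, h⟩ := h1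
    have := hc.2.1 u v hu
    rw [Finset.mem_Icc] at this
    omega
  · intro x
    rw [hmin]
    have : (∃ u, u ≠ v ∧ c s(u, v) = x) ↔ x ∈ S := Iff.rfl
    rw [this, hab, hb₀]
    exact Set.mem_Icc

/-- The partner of `v` in the color class `x`. -/
noncomputable def pt (n : ℕ) (c : Sym2 (Fin (2*n)) → ℕ) (v : Fin (2*n)) (x : ℕ) : Fin (2*n) :=
  if h : ∃ u, u ≠ v ∧ c s(u, v) = x then h.choose else v

lemma pt_spec {n : ℕ} {c : Sym2 (Fin (2*n)) → ℕ} {v : Fin (2*n)} {x : ℕ}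
    (h : ∃ u, u ≠ v ∧ c s(u, v) = x) :
    pt n c v x ≠ v ∧ c s(pt n c v x, v) = x := by
  rw [pt, dif_pos h]
  exact h.choose_spec


end AuxShiftVector

/-- `k(2k-1) ≥ Σ_{i=1}^{k} i b_i + Σ_{i=k+1}^{min(2k-1,n-1)} (2k-i) b_i`
for every `2 ≤ k ≤ n-2`, where `(b_i)` is the shift vector of an interval
coloring of `K_{2n}`. -/
theorem statement_15 (n t : ℕ) (c : Sym2 (Fin (2 * n)) → ℕ)
    (hc : IsIntervalColoring (2 * n) t c) :
    ∀ k : ℕ, 2 ≤ k → k ≤ n - 2 →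
      ∑ i ∈ Finset.Icc 1 k, i * shiftVec n c i +
        ∑ i ∈ Finset.Icc (k + 1) (min (2 * k - 1) (n - 1)), (2 * k - i) * shiftVec n c i
      ≤ k * (2 * k - 1) := by
  intro k hk2 hkn
  have hn : 4 ≤ n := by omega
  classical
  set a : Fin (2*n) → ℕ := minColor (2*n) c with ha
  have hspec : ∀ v, 1 ≤ a v ∧
      ∀ x : ℕ, (∃ u, u ≠ v ∧ c s(u, v) = x) ↔ (a v ≤ x ∧ x ≤ a v + (2*n - 2)) :=
    fun v => spec_struct hc (by omega) v
  set L : List ℕ := sortedMins (2*n) c with hLdef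
  have hsort : L.Pairwise (· ≤ ·) := Multiset.pairwise_sort _ _
  have hLmult : (↑L : Multiset ℕ) = Multiset.map a Finset.univ.val := by
    rw [hLdef, sortedMins, Multiset.sort_eq]
  have hlen : L.length = 2*n := by
    have : (↑L : Multiset ℕ).card = 2*n := by
      rw [hLmult, Multiset.card_map]
      simp
    simpa using this
  set g : ℕ → ℕ := fun j => L.getD j 0 with hg
  set r : ℕ → ℕ := fun x => (Finset.univ.filter (fun v => a v ≤ x)).card with hr
  have hrcount : ∀ x, r x = L.countP (fun y => decide (y ≤ x)) := by
    intro x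
    have h1 : r x = Multiset.countP (fun v => a v ≤ x) Finset.univ.val := by
      show (Finset.filter (fun v => a v ≤ x) Finset.univ).card = _
      rw [Finset.card_def, Finset.filter_val, Multiset.countP_eq_card_filter]
    have h2 : Multiset.countP (fun y => y ≤ x) (Multiset.map a Finset.univ.val)
        = Multiset.countP (fun v => a v ≤ x) Finset.univ.val := by
      rw [Multiset.countP_map, Multiset.countP_eq_card_filter]
    have h3 : Multiset.countP (fun y => y ≤ x) (↑L : Multiset ℕ)
        = L.countP (fun y => decide (y ≤ x)) := by
      simp [Multiset.coe_countP]
    rw [h1, ← h2, ← hLmult, h3]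
  have hmono : ∀ i j, i ≤ j → j < 2*n → g i ≤ g j := by
    intro i j hij hj
    have hi' : i < L.length := by omega
    have hj' : j < L.length := by omega
    show L.getD i 0 ≤ L.getD j 0
    rw [List.getD_eq_getElem L 0 hi', List.getD_eq_getElem L 0 hj']
    exact hsort.rel_get_of_le (a := ⟨i, hi'⟩) (b := ⟨j, hj'⟩) hij
  have hpos1 : ∀ j x, j < 2*n → g j ≤ x → j < r x := by
    intro j x hj h
    rw [hrcount]
    exact sorted_pos_lt_count L hsort j x (by omega) h
  have hpos2 : ∀ j x, j < 2*n → j < r x → g j ≤ x := by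
    intro j x hj h
    rw [hrcount] at h
    exact sorted_count_le_pos L hsort j x (by omega) h
  have hge1 : ∀ j, j < 2*n → 1 ≤ g j := by
    intro j hj
    have hj' : j < L.length := by omega
    have hmem : g j ∈ L := by
      show L.getD j 0 ∈ L
      rw [List.getD_eq_getElem L 0 hj']
      exact List.getElem_mem _
    have : g j ∈ Multiset.map a Finset.univ.val := by
      rw [← hLmult]; exact_mod_cast hmem
    obtain ⟨v, _, hv⟩ := Multiset.mem_map.mp this
    rw [← hv]
    exact (hspec v).1
  have hall : ∀ x, (∃ v, a v ≤ x ∧ a v + (2*n-2) < x) → ∀ u, a u ≤ x := by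
    rintro x ⟨v, hvx, hvo⟩ u
    by_cases huv : u = v
    · rw [huv]; exact hvx
    · have hyv := ((hspec v).2 (c s(u,v))).mp ⟨u, huv, rfl⟩
      have hyu := ((hspec u).2 (c s(u,v))).mp
        ⟨v, fun h => huv h.symm, by rw [show s(v,u) = s(u,v) from Sym2.eq_swap]⟩
      omega
  have hrbig : ∀ x, (∃ v, a v ≤ x ∧ a v + (2*n-2) < x) → r x = 2*n := by
    intro x hx
    have : r x = (Finset.univ.filter (fun v => a v ≤ x)).card := rfl
    rw [this, Finset.filter_true_of_mem (fun u _ => hall x hx u), Finset.card_univ]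
    simp
  have hEven : ∀ x, Even (r x) := by
    intro x
    by_cases hov : ∃ v, a v ≤ x ∧ a v + (2*n-2) < x
    · rw [hrbig x hov]; exact ⟨n, by omega⟩
    · push_neg at hov
      have hrx : r x = (Finset.univ.filter (fun v => a v ≤ x)).card := rfl
      rw [hrx]
      apply even_card_invol _ (fun v => pt n c v x)
      · intro v hv
        rw [Finset.mem_filter] at hv ⊢
        have hex : ∃ u, u ≠ v ∧ c s(u,v) = x := ((hspec v).2 x).mpr ⟨hv.2, hov v hv.2⟩
        obtain ⟨hne, hcol⟩ := pt_spec hex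
        refine ⟨Finset.mem_univ _, ?_⟩
        exact (((hspec (pt n c v x)).2 x).mp
          ⟨v, Ne.symm hne, by rw [show s(v, pt n c v x) = s(pt n c v x, v) from Sym2.eq_swap]; exact hcol⟩).1
      · intro v hv
        rw [Finset.mem_filter] at hv
        have hex : ∃ u, u ≠ v ∧ c s(u,v) = x := ((hspec v).2 x).mpr ⟨hv.2, hov v hv.2⟩
        obtain ⟨hne, hcol⟩ := pt_spec hex
        have hex2 : ∃ u, u ≠ pt n c v x ∧ c s(u, pt n c v x) = x :=
          ⟨v, Ne.symm hne, by rw [show s(v, pt n c v x) = s(pt n c v x, v) from Sym2.eq_swap]; exact hcol⟩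
        obtain ⟨hne2, hcol2⟩ := pt_spec hex2
        exact color_uniq hc hne2 (Ne.symm hne) hcol2
          (by rw [show s(v, pt n c v x) = s(pt n c v x, v) from Sym2.eq_swap]; exact hcol)
      · intro v hv
        rw [Finset.mem_filter] at hv
        have hex : ∃ u, u ≠ v ∧ c s(u,v) = x := ((hspec v).2 x).mpr ⟨hv.2, hov v hv.2⟩
        exact (pt_spec hex).1
  have hpair : ∀ i, 2*i+1 < 2*n → g (2*i+1) = g (2*i) := by
    intro i hi
    have h1 : 2*i < r (g (2*i)) := hpos1 (2*i) _ (by omega) (le_refl _)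
    obtain ⟨m, hm⟩ := hEven (g (2*i))
    have h2 : 2*i+1 < r (g (2*i)) := by omega
    exact le_antisymm (hpos2 _ _ hi h2) (hmono _ _ (by omega) hi)
  set K := min (2*k-1) (n-1) with hKdef
  have hK1 : k + 1 ≤ K := by rw [hKdef]; omega
  have hK2 : 2*K ≤ 2*n - 2 := by rw [hKdef]; omega
  have hKk : K ≤ 2*k-1 := by rw [hKdef]; omega
  set X := g (2*K) with hX
  set M₀ := g (2*k-1) with hM₀
  have hM₀pos : 1 ≤ M₀ := hge1 _ (by omega)
  have hno : ∀ x, x < X → ∀ v, a v ≤ x → x ≤ a v + (2*n-2) := by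
    intro x hx v hv
    by_contra h
    push_neg at h
    have hbig := hrbig x ⟨v, hv, h⟩
    have h2K : 2*K < r x := by omega
    have := hpos2 (2*K) x (by omega) h2K
    omega
  -- construction of S : 2k vertices of smallest incident color
  set A1 := Finset.univ.filter (fun v => a v < M₀) with hA1
  set A2 := Finset.univ.filter (fun v => a v ≤ M₀) with hA2
  have hA1card : A1.card ≤ 2*k - 1 := by
    by_contra h
    push_neg at h
    have he : A1 = Finset.univ.filter (fun v => a v ≤ M₀ - 1) := by
      rw [hA1]
      apply Finset.filter_congr
      intro v _
      constructor
      · intro hv; omega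
      · intro hv; omega
    have hrM : 2*k - 1 < r (M₀ - 1) := by
      have : r (M₀ - 1) = A1.card := by rw [he]
      omega
    have := hpos2 (2*k-1) (M₀-1) (by omega) hrM
    omega
  have hA2card : 2*k ≤ A2.card := by
    have h := hpos1 (2*k-1) M₀ (by omega) (le_refl _)
    have : r M₀ = A2.card := rfl
    omega
  have hA12 : A1 ⊆ A2 := by
    intro v hv
    rw [hA1, Finset.mem_filter] at hv
    rw [hA2, Finset.mem_filter]
    exact ⟨hv.1, le_of_lt hv.2⟩
  obtain ⟨S, hSA1, hSA2, hScard⟩ :=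
    Finset.exists_subsuperset_card_eq (n := 2*k) hA12 (by omega) (by omega)
  have hScard' : S.card = 2*k := by omega
  have hSa : ∀ v ∈ S, a v ≤ M₀ := by
    intro v hv
    have := hSA2 hv
    rw [hA2, Finset.mem_filter] at this
    exact this.2
  have hSlow : ∀ v, a v < M₀ → v ∈ S := by
    intro v hv
    exact hSA1 (by rw [hA1, Finset.mem_filter]; exact ⟨Finset.mem_univ _, hv⟩)
  set D : ℕ → Finset (Fin (2*n)) := fun x => S.filter (fun v => a v ≤ x ∧ pt n c v x ∈ S) with hD
  -- the per-color lower bound on |D x|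
  have hperx : ∀ i, 1 ≤ i → i ≤ K → ∀ x, g (2*i-2) ≤ x → x < g (2*i) →
      2 * min i (2*k - i) ≤ (D x).card := by
    intro i hi1 hiK x hx1 hx2
    have hxX : x < X := lt_of_lt_of_le hx2 (hmono (2*i) (2*K) (by omega) (by omega))
    have hDx : (D x) = S.filter (fun v => a v ≤ x ∧ pt n c v x ∈ S) := rfl
    have hptfacts : ∀ v, a v ≤ x → pt n c v x ≠ v ∧ c s(pt n c v x, v) = x ∧ a (pt n c v x) ≤ x := by
      intro v hv
      have hex : ∃ u, u ≠ v ∧ c s(u,v) = x := ((hspec v).2 x).mpr ⟨hv, hno x hxX v hv⟩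
      obtain ⟨hne, hcol⟩ := pt_spec hex
      refine ⟨hne, hcol, ?_⟩
      exact (((hspec (pt n c v x)).2 x).mp
        ⟨v, Ne.symm hne, by rw [show s(v, pt n c v x) = s(pt n c v x, v) from Sym2.eq_swap]; exact hcol⟩).1
    have hrx : r x = 2*i := by
      have hlow : 2*i - 1 < r x := by
        apply hpos1 (2*i-1) x (by omega)
        have hpp : g (2*i-1) = g (2*i-2) := by
          have := hpair (i-1) (by omega)
          rw [show 2*(i-1)+1 = 2*i-1 by omega, show 2*(i-1) = 2*i-2 by omega] at this
          exact this
        omega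
      have hup : r x ≤ 2*i := by
        by_contra h
        push_neg at h
        have := hpos2 (2*i) x (by omega) h
        omega
      obtain ⟨m, hm⟩ := hEven x
      omega
    by_cases hcase : r x ≤ 2*k - 1
    · have hxM : x < M₀ := by
        by_contra h
        push_neg at h
        have := hpos1 (2*k-1) x (by omega) h
        omega
      have hsub : Finset.univ.filter (fun v => a v ≤ x) ⊆ D x := by
        intro v hv
        rw [Finset.mem_filter] at hv
        obtain ⟨hne, hcol, hapt⟩ := hptfacts v hv.2
        rw [hDx, Finset.mem_filter]
        exact ⟨hSlow v (by omega), hv.2, hSlow _ (by omega)⟩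
      have hcard := Finset.card_le_card hsub
      have hrfl : r x = (Finset.univ.filter (fun v => a v ≤ x)).card := rfl
      have hmin : min i (2*k - i) = i := by omega
      omega
    · push_neg at hcase
      have hxM : M₀ ≤ x := hpos2 (2*k-1) x (by omega) (by omega)
      have hSsub : ∀ v ∈ S, a v ≤ x := fun v hv => le_trans (hSa v hv) hxM
      set B := S.filter (fun v => pt n c v x ∉ S) with hB
      have hSfilter : S ⊆ Finset.univ.filter (fun v => a v ≤ x) := by
        intro v hv
        rw [Finset.mem_filter]
        exact ⟨Finset.mem_univ _, hSsub v hv⟩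
      have hBcard : B.card ≤ r x - 2*k := by
        have hmaps : ∀ v ∈ B, pt n c v x ∈ (Finset.univ.filter (fun v => a v ≤ x)) \ S := by
          intro v hv
          rw [hB, Finset.mem_filter] at hv
          obtain ⟨hne, hcol, hapt⟩ := hptfacts v (hSsub v hv.1)
          rw [Finset.mem_sdiff, Finset.mem_filter]
          exact ⟨⟨Finset.mem_univ _, hapt⟩, hv.2⟩
        have hinj : Set.InjOn (fun v => pt n c v x) B := by
          intro v hv w hw heq
          rw [Finset.mem_coe, hB, Finset.mem_filter] at hv hw
          obtain ⟨hnev, hcolv, _⟩ := hptfacts v (hSsub v hv.1)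
          obtain ⟨hnew, hcolw, _⟩ := hptfacts w (hSsub w hw.1)
          simp only at heq
          -- v and w are both partners of (pt n c v x) for color x
          have h1' : c s(v, pt n c v x) = x := by
            rw [show s(v, pt n c v x) = s(pt n c v x, v) from Sym2.eq_swap]; exact hcolv
          have h2' : c s(w, pt n c v x) = x := by
            rw [heq, show s(w, pt n c w x) = s(pt n c w x, w) from Sym2.eq_swap]; exact hcolw
          have hw' : w ≠ pt n c v x := by rw [heq]; exact Ne.symm hnew
          exact color_uniq hc (Ne.symm hnev) hw' h1' h2'
        have hle := Finset.card_le_card_of_injOn _ hmaps hinj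
        have hsd : ((Finset.univ.filter (fun v => a v ≤ x)) \ S).card = r x - 2*k := by
          rw [Finset.card_sdiff_of_subset hSfilter, hScard']
        omega
      have hDB : (D x).card + B.card = S.card := by
        have hDx2 : D x = S.filter (fun v => pt n c v x ∈ S) := by
          rw [hDx]
          apply Finset.filter_congr
          intro v hv
          constructor
          · intro h; exact h.2
          · intro h; exact ⟨hSsub v hv, h⟩
        rw [hDx2, hB]
        exact Finset.card_filter_add_card_filter_not _
      have hmin : min i (2*k - i) = 2*k - i := by omega
      omega
  -- assemble: double counting against ordered pairs of S
  set P := (Finset.Ico 1 X).sigma D with hP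
  have hPcard : P.card = ∑ x ∈ Finset.Ico 1 X, (D x).card := Finset.card_sigma _ _
  have hPle : P.card ≤ S.offDiag.card := by
    apply Finset.card_le_card_of_injOn (fun p => (p.2, pt n c p.2 p.1))
    · intro p hp
      obtain ⟨hx, hv⟩ := Finset.mem_sigma.mp hp
      rw [Finset.mem_filter] at hv
      rw [Finset.mem_Ico] at hx
      have hex : ∃ u, u ≠ p.2 ∧ c s(u, p.2) = p.1 :=
        ((hspec p.2).2 p.1).mpr ⟨hv.2.1, hno p.1 hx.2 p.2 hv.2.1⟩
      obtain ⟨hne, _⟩ := pt_spec hex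
      exact Finset.mem_offDiag.mpr ⟨hv.1, hv.2.2, Ne.symm hne⟩
    · intro p hp q hq heq
      rw [Finset.mem_coe] at hp hq
      obtain ⟨hx, hv⟩ := Finset.mem_sigma.mp hp
      obtain ⟨hx', hv'⟩ := Finset.mem_sigma.mp hq
      rw [Finset.mem_filter] at hv hv'
      rw [Finset.mem_Ico] at hx hx'
      have hv2 : p.2 = q.2 := (Prod.ext_iff.mp heq).1
      have hpt2 : pt n c p.2 p.1 = pt n c q.2 q.1 := (Prod.ext_iff.mp heq).2
      have hex : ∃ u, u ≠ p.2 ∧ c s(u, p.2) = p.1 :=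
        ((hspec p.2).2 p.1).mpr ⟨hv.2.1, hno p.1 hx.2 p.2 hv.2.1⟩
      have hex' : ∃ u, u ≠ q.2 ∧ c s(u, q.2) = q.1 :=
        ((hspec q.2).2 q.1).mpr ⟨hv'.2.1, hno q.1 hx'.2 q.2 hv'.2.1⟩
      have h1 : c s(pt n c p.2 p.1, p.2) = p.1 := (pt_spec hex).2
      have h2 : c s(pt n c q.2 q.1, q.2) = q.1 := (pt_spec hex').2
      have hcol : p.1 = q.1 := by rw [← h1, ← h2, hpt2, hv2]
      exact Sigma.ext hcol (heq_of_eq hv2)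
  have hoffcard : S.offDiag.card = 2*k*(2*k) - 2*k := by
    rw [Finset.offDiag_card _, hScard']
  -- lower bound the sum over colors
  have hdisj : (↑(Finset.Icc 1 K) : Set ℕ).PairwiseDisjoint
      (fun i => Finset.Ico (g (2*i-2)) (g (2*i))) := by
    intro i hi j hj hij
    rw [Finset.mem_coe, Finset.mem_Icc] at hi hj
    rcases lt_or_gt_of_ne hij with h | h
    · apply Finset.disjoint_left.mpr
      intro x hx1 hx2
      rw [Finset.mem_Ico] at hx1 hx2
      have := hmono (2*i) (2*j-2) (by omega) (by omega)
      omega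
    · apply Finset.disjoint_right.mpr
      intro x hx1 hx2
      rw [Finset.mem_Ico] at hx1 hx2
      have := hmono (2*j) (2*i-2) (by omega) (by omega)
      omega
  have hTsub : (Finset.Icc 1 K).biUnion (fun i => Finset.Ico (g (2*i-2)) (g (2*i)))
      ⊆ Finset.Ico 1 X := by
    intro x hx
    rw [Finset.mem_biUnion] at hx
    obtain ⟨i, hi, hx⟩ := hx
    rw [Finset.mem_Icc] at hi
    rw [Finset.mem_Ico] at hx ⊢
    constructor
    · have := hge1 (2*i-2) (by omega)
      omega
    · exact lt_of_lt_of_le hx.2 (hmono (2*i) (2*K) (by omega) (by omega))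
  have hlow : ∑ i ∈ Finset.Icc 1 K, 2 * min i (2*k - i) * (g (2*i) - g (2*i-2))
      ≤ ∑ x ∈ Finset.Ico 1 X, (D x).card := by
    calc ∑ i ∈ Finset.Icc 1 K, 2 * min i (2*k - i) * (g (2*i) - g (2*i-2))
        = ∑ i ∈ Finset.Icc 1 K, ∑ _x ∈ Finset.Ico (g (2*i-2)) (g (2*i)), 2 * min i (2*k - i) := by
          apply Finset.sum_congr rfl
          intro i _
          rw [Finset.sum_const, Nat.card_Ico, smul_eq_mul, mul_comm]
      _ ≤ ∑ i ∈ Finset.Icc 1 K, ∑ x ∈ Finset.Ico (g (2*i-2)) (g (2*i)), (D x).card := by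
          apply Finset.sum_le_sum
          intro i hi
          rw [Finset.mem_Icc] at hi
          apply Finset.sum_le_sum
          intro x hx
          rw [Finset.mem_Ico] at hx
          exact hperx i hi.1 hi.2 x hx.1 hx.2
      _ = ∑ x ∈ (Finset.Icc 1 K).biUnion (fun i => Finset.Ico (g (2*i-2)) (g (2*i))), (D x).card :=
          (Finset.sum_biUnion hdisj).symm
      _ ≤ ∑ x ∈ Finset.Ico 1 X, (D x).card := Finset.sum_le_sum_of_subset hTsub
  have hZ : ∑ i ∈ Finset.Icc 1 K, min i (2*k - i) * (g (2*i) - g (2*i-2)) ≤ k * (2*k-1) := by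
    have h2 : 2 * ∑ i ∈ Finset.Icc 1 K, min i (2*k - i) * (g (2*i) - g (2*i-2))
        = ∑ i ∈ Finset.Icc 1 K, 2 * min i (2*k - i) * (g (2*i) - g (2*i-2)) := by
      rw [Finset.mul_sum]
      apply Finset.sum_congr rfl
      intro i _
      ring
    have he : 2 * (k * (2*k-1)) = 2*k*(2*k) - 2*k := by
      have : 2 * (k * (2*k-1)) = (2*k) * (2*k-1) := by ring
      rw [this, Nat.mul_sub_one]
    omega
  -- rewrite the goal
  have hsv : ∀ i, shiftVec n c i = g (2*i) - g (2*i-2) := fun i => rfl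
  have hsplit : Finset.Icc 1 K = Finset.Icc 1 k ∪ Finset.Icc (k+1) K := by
    ext x
    simp only [Finset.mem_Icc, Finset.mem_union]
    omega
  have hdisj2 : Disjoint (Finset.Icc 1 k) (Finset.Icc (k+1) K) := by
    apply Finset.disjoint_left.mpr
    intro x hx1 hx2
    rw [Finset.mem_Icc] at hx1 hx2
    omega
  calc ∑ i ∈ Finset.Icc 1 k, i * shiftVec n c i +
        ∑ i ∈ Finset.Icc (k + 1) K, (2 * k - i) * shiftVec n c i
      = ∑ i ∈ Finset.Icc 1 k, min i (2*k - i) * (g (2*i) - g (2*i-2)) +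
        ∑ i ∈ Finset.Icc (k + 1) K, min i (2*k - i) * (g (2*i) - g (2*i-2)) := by
        congr 1
        · apply Finset.sum_congr rfl
          intro i hi
          rw [Finset.mem_Icc] at hi
          rw [hsv i, show min i (2*k - i) = i by omega]
        · apply Finset.sum_congr rfl
          intro i hi
          rw [Finset.mem_Icc] at hi
          rw [hsv i, show min i (2*k - i) = 2*k - i by omega]
    _ = ∑ i ∈ Finset.Icc 1 K, min i (2*k - i) * (g (2*i) - g (2*i-2)) := by
        rw [hsplit, Finset.sum_union hdisj2]
    _ ≤ k * (2*k-1) := hZ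
end

section
/- Let α be an interval t-coloring of K_{2n} with shift vector (b_1, b_2, …, b_{n-1}), and suppose that for some k with 2 ≤ k ≤ n-2 the initial segment is saturated, i.e., b_1 + b_2 + … + b_k = 2k - 1. Then b_{k+1} ≤ 1. -/
open Finset

section Aux

variable {n t : ℕ} {c : Sym2 (Fin (2 * n)) → ℕ}

/-- Properness in the convenient form. -/
lemma aux_proper (hc : IsIntervalColoring (2 * n) t c) {u w v : Fin (2 * n)}
    (hu : u ≠ v) (hw : w ≠ v) (huw : u ≠ w) : c s(u, v) ≠ c s(w, v) := by
  have := hc.1 v u w (Ne.symm hu) (Ne.symm hw) huw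
  rwa [Sym2.eq_swap (a := v) (b := u), Sym2.eq_swap (a := v) (b := w)] at this

/-- The spectrum of every vertex is exactly `Icc (s v) (s v + (2n-2))`, and `1 ≤ s v`. -/
lemma aux_spectrum (hc : IsIntervalColoring (2 * n) t c) (hn : 1 ≤ n) (v : Fin (2 * n)) :
    1 ≤ minColor (2 * n) c v ∧
    {k : ℕ | ∃ u : Fin (2 * n), u ≠ v ∧ c s(u, v) = k} =
      Set.Icc (minColor (2 * n) c v) (minColor (2 * n) c v + (2 * n - 2)) := by
  obtain ⟨a, b, hab⟩ := hc.2.2.2 v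
  have hinj : Set.InjOn (fun u => c s(u, v)) ↑((univ : Finset (Fin (2 * n))).erase v) := by
    intro u hu w hw h
    simp only [coe_erase, Set.mem_diff, Set.mem_singleton_iff] at hu hw
    by_contra hne
    exact aux_proper hc hu.2 hw.2 hne h
  have himg : ((univ : Finset (Fin (2 * n))).erase v).image (fun u => c s(u, v))
      = Finset.Icc a b := by
    apply Finset.coe_injective
    rw [Finset.coe_image, Finset.coe_Icc, ← hab]
    ext x
    simp only [Set.mem_image, Finset.coe_erase, Set.mem_diff, Set.mem_singleton_iff,
      Finset.coe_univ, Set.mem_univ, true_and, Set.mem_setOf_eq]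
  have hcard : (Finset.Icc a b).card = 2 * n - 1 := by
    rw [← himg, Finset.card_image_of_injOn hinj, Finset.card_erase_of_mem (mem_univ v),
      Finset.card_univ, Fintype.card_fin]
  rw [Nat.card_Icc] at hcard
  have hab' : a ≤ b := by omega
  have hb : b = a + (2 * n - 2) := by omega
  have ha1 : 1 ≤ a := by
    have : a ∈ Finset.Icc a b := Finset.mem_Icc.2 ⟨le_refl a, hab'⟩
    rw [← himg, Finset.mem_image] at this
    obtain ⟨u, hu, hcu⟩ := this
    have := hc.2.1 u v (by simpa using (Finset.mem_erase.1 hu).1)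
    rw [hcu] at this
    exact (Finset.mem_Icc.1 this).1
  have hmin : minColor (2 * n) c v = a := by
    unfold minColor
    rw [hab]
    apply le_antisymm
    · exact Nat.sInf_le (Set.mem_Icc.2 ⟨le_refl a, hab'⟩)
    · have hne : (Set.Icc a b).Nonempty := ⟨a, Set.mem_Icc.2 ⟨le_refl a, hab'⟩⟩
      exact (Set.mem_Icc.1 (Nat.sInf_mem hne)).1
  constructor
  · rw [hmin]; exact ha1
  · rw [hmin, hab, hb]

lemma aux_s_pos (hc : IsIntervalColoring (2 * n) t c) (hn : 1 ≤ n) (v : Fin (2 * n)) :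
    1 ≤ minColor (2 * n) c v := (aux_spectrum hc hn v).1

lemma aux_color_mem (hc : IsIntervalColoring (2 * n) t c) (hn : 1 ≤ n) {u v : Fin (2 * n)}
    (huv : u ≠ v) : minColor (2 * n) c v ≤ c s(u, v) ∧
      c s(u, v) ≤ minColor (2 * n) c v + (2 * n - 2) := by
  have h := (aux_spectrum hc hn v).2
  have : c s(u, v) ∈ {k : ℕ | ∃ u : Fin (2 * n), u ≠ v ∧ c s(u, v) = k} := ⟨u, huv, rfl⟩
  rw [h] at this
  exact Set.mem_Icc.1 this

lemma aux_color_mem' (hc : IsIntervalColoring (2 * n) t c) (hn : 1 ≤ n) {u v : Fin (2 * n)}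
    (huv : u ≠ v) : minColor (2 * n) c u ≤ c s(u, v) ∧
      c s(u, v) ≤ minColor (2 * n) c u + (2 * n - 2) := by
  have h := aux_color_mem hc hn (Ne.symm huv)
  rwa [Sym2.eq_swap (a := v) (b := u)] at h

lemma aux_partner_exists (hc : IsIntervalColoring (2 * n) t c) (hn : 1 ≤ n) {v : Fin (2 * n)}
    {j : ℕ} (hj1 : minColor (2 * n) c v ≤ j) (hj2 : j ≤ minColor (2 * n) c v + (2 * n - 2)) :
    ∃ u : Fin (2 * n), u ≠ v ∧ c s(u, v) = j := by
  have h := (aux_spectrum hc hn v).2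
  have : j ∈ Set.Icc (minColor (2 * n) c v) (minColor (2 * n) c v + (2 * n - 2)) := ⟨hj1, hj2⟩
  rw [← h] at this
  exact this

open Classical in
noncomputable def auxPartner (n : ℕ) (c : Sym2 (Fin (2 * n)) → ℕ) (v : Fin (2 * n)) (j : ℕ) :
    Fin (2 * n) :=
  if h : ∃ u : Fin (2 * n), u ≠ v ∧ c s(u, v) = j then h.choose else v

lemma auxPartner_spec {v : Fin (2 * n)} {j : ℕ}
    (h : ∃ u : Fin (2 * n), u ≠ v ∧ c s(u, v) = j) :
    auxPartner n c v j ≠ v ∧ c s(auxPartner n c v j, v) = j := by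
  unfold auxPartner
  rw [dif_pos h]
  exact h.choose_spec

lemma auxPartner_eq (hc : IsIntervalColoring (2 * n) t c) {u v : Fin (2 * n)} {j : ℕ}
    (hu : u ≠ v) (hcu : c s(u, v) = j) : auxPartner n c v j = u := by
  have h : ∃ u : Fin (2 * n), u ≠ v ∧ c s(u, v) = j := ⟨u, hu, hcu⟩
  obtain ⟨h1, h2⟩ := auxPartner_spec h
  by_contra hne
  exact aux_proper hc h1 hu hne (by rw [h2, hcu])

/-- There is a vertex with smallest color 1. -/
lemma aux_exists_one (hc : IsIntervalColoring (2 * n) t c) (hn : 1 ≤ n) :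
    ∃ v : Fin (2 * n), minColor (2 * n) c v = 1 := by
  have h2 : 1 < 2 * n := by omega
  have hne : (⟨0, by omega⟩ : Fin (2 * n)) ≠ ⟨1, h2⟩ := by
    simp [Fin.ext_iff]
  have ht : 1 ≤ t := by
    have hm := hc.2.1 _ _ hne
    rw [Finset.mem_Icc] at hm
    omega
  obtain ⟨u, v, huv, hcuv⟩ := hc.2.2.1 1 le_rfl ht
  refine ⟨v, le_antisymm ?_ (aux_s_pos hc hn v)⟩
  have := (aux_color_mem hc hn huv).1
  omega

/-- The counting lemma (★): at least `j+1` vertices have smallest color `≤ j`. -/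
lemma aux_count (hc : IsIntervalColoring (2 * n) t c) (hn : 1 ≤ n) {j : ℕ}
    (hj1 : 1 ≤ j) (hj2 : j ≤ 2 * n - 1) :
    j + 1 ≤ ((univ : Finset (Fin (2 * n))).filter
      (fun v => minColor (2 * n) c v ≤ j)).card := by
  obtain ⟨v₁, hv₁⟩ := aux_exists_one hc hn
  have hex : ∀ i ∈ Finset.Icc 1 j, ∃ u : Fin (2 * n), u ≠ v₁ ∧ c s(u, v₁) = i := by
    intro i hi
    rw [Finset.mem_Icc] at hi
    exact aux_partner_exists hc hn (by omega) (by omega)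
  set F := (Finset.Icc 1 j).image (auxPartner n c v₁) with hF
  have hinj : Set.InjOn (auxPartner n c v₁) ↑(Finset.Icc 1 j) := by
    intro i hi i' hi' h
    have h1 := (auxPartner_spec (hex i (by simpa using hi))).2
    have h2 := (auxPartner_spec (hex i' (by simpa using hi'))).2
    rw [h] at h1
    rw [h1] at h2
    exact h2
  have hcardF : F.card = j := by
    rw [hF, Finset.card_image_of_injOn hinj, Nat.card_Icc]
    omega
  have hsub : insert v₁ F ⊆ (univ : Finset (Fin (2 * n))).filter
      (fun v => minColor (2 * n) c v ≤ j) := by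
    intro u hu
    rw [Finset.mem_insert] at hu
    rcases hu with rfl | hu
    · simp only [Finset.mem_filter, Finset.mem_univ, true_and]
      omega
    · rw [hF, Finset.mem_image] at hu
      obtain ⟨i, hi, rfl⟩ := hu
      obtain ⟨hne, hcol⟩ := auxPartner_spec (hex i hi)
      simp only [Finset.mem_filter, Finset.mem_univ, true_and]
      have hcol2 := (aux_color_mem' hc hn hne).1
      rw [hcol] at hcol2
      rw [Finset.mem_Icc] at hi
      omega
  have hnotmem : v₁ ∉ F := by
    rw [hF, Finset.mem_image]
    rintro ⟨i, hi, hpi⟩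
    exact (auxPartner_spec (hex i hi)).1 hpi
  calc j + 1 = (insert v₁ F).card := by rw [Finset.card_insert_of_notMem hnotmem, hcardF]
    _ ≤ _ := Finset.card_le_card hsub

/-! ### Sorted list lemmas -/

lemma aux_len : (sortedMins (2 * n) c).length = 2 * n := by
  unfold sortedMins
  rw [Multiset.length_sort, Multiset.card_map]
  simpa using (Finset.card_univ (α := Fin (2 * n)))

lemma aux_sorted : (sortedMins (2 * n) c).Pairwise (· ≤ ·) :=
  Multiset.pairwise_sort _ _

lemma aux_getD_mem {i : ℕ} (hi : i < 2 * n) :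
    ∃ v : Fin (2 * n), (sortedMins (2 * n) c).getD i 0 = minColor (2 * n) c v := by
  have hi' : i < (sortedMins (2 * n) c).length := by rw [aux_len]; exact hi
  rw [List.getD_eq_getElem _ _ hi']
  have hmem : (sortedMins (2 * n) c)[i] ∈ (sortedMins (2 * n) c) := List.getElem_mem hi'
  have : (sortedMins (2 * n) c)[i] ∈
      ((Finset.univ : Finset (Fin (2 * n))).val.map (minColor (2 * n) c)) := by
    rw [← Multiset.sort_eq ((Finset.univ : Finset (Fin (2 * n))).val.map
      (minColor (2 * n) c)) (· ≤ ·)]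
    exact_mod_cast hmem
  rw [Multiset.mem_map] at this
  obtain ⟨v, _, hv⟩ := this
  exact ⟨v, hv.symm⟩

lemma aux_mono {i j : ℕ} (hij : i ≤ j) (hj : j < 2 * n) :
    (sortedMins (2 * n) c).getD i 0 ≤ (sortedMins (2 * n) c).getD j 0 := by
  have hj' : j < (sortedMins (2 * n) c).length := by rw [aux_len]; exact hj
  have hi' : i < (sortedMins (2 * n) c).length := lt_of_le_of_lt hij hj'
  rw [List.getD_eq_getElem _ _ hi', List.getD_eq_getElem _ _ hj']
  rcases eq_or_lt_of_le hij with rfl | h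
  · exact le_refl _
  · exact (List.pairwise_iff_getElem.1 aux_sorted) i j hi' hj' h

/-- If at least `i+1` vertices have smallest color `≤ x` then `m_{i+1} ≤ x`. -/
lemma aux_getD_le {i x : ℕ} (hi : i < 2 * n)
    (h : i + 1 ≤ ((univ : Finset (Fin (2 * n))).filter
      (fun v => minColor (2 * n) c v ≤ x)).card) :
    (sortedMins (2 * n) c).getD i 0 ≤ x := by
  set L := sortedMins (2 * n) c with hL
  have hi' : i < L.length := by rw [hL, aux_len]; exact hi
  by_contra hx
  push_neg at hx
  -- translate the card to a countP over L
  have hML : (↑L : Multiset ℕ) = ((Finset.univ : Finset (Fin (2 * n))).val.map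
      (minColor (2 * n) c)) := by
    rw [hL]
    exact Multiset.sort_eq _ _
  have hcount : ((univ : Finset (Fin (2 * n))).filter
      (fun v => minColor (2 * n) c v ≤ x)).card
      = L.countP (fun y => decide (y ≤ x)) := by
    rw [← Multiset.coe_countP, hML, Multiset.countP_map]
    rfl
  rw [hcount] at h
  -- now show countP ≤ i
  have hsplit : L.countP (fun y => decide (y ≤ x)) =
      (L.take i).countP (fun y => decide (y ≤ x)) +
      (L.drop i).countP (fun y => decide (y ≤ x)) := by
    conv_lhs => rw [← List.take_append_drop i L]
    rw [List.countP_append]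
  have h1 : (L.take i).countP (fun y => decide (y ≤ x)) ≤ i := by
    calc (L.take i).countP (fun y => decide (y ≤ x)) ≤ (L.take i).length :=
          List.countP_le_length
      _ ≤ i := by rw [List.length_take]; omega
  have h2 : (L.drop i).countP (fun y => decide (y ≤ x)) = 0 := by
    rw [List.countP_eq_zero]
    intro a ha
    rw [List.mem_iff_getElem] at ha
    obtain ⟨m, hm, ha⟩ := ha
    have hlen : i + m < L.length := by
      rw [List.length_drop] at hm; omega
    have hlen2 : i + m < 2 * n := by
      rw [hL, aux_len] at hlen
      exact hlen
    have hget : a = L.getD (i + m) 0 := by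
      rw [List.getD_eq_getElem _ _ hlen, ← ha, List.getElem_drop]
    have hle : L.getD i 0 ≤ L.getD (i + m) 0 := by
      rw [hL]
      exact aux_mono (by omega) hlen2
    simp only [decide_eq_true_eq]
    omega
  omega

end Aux



/-- If the initial segment `(b_1,…,b_k)` of the shift vector of an interval
coloring of `K_{2n}` is saturated (`b_1 + ⋯ + b_k = 2k - 1`) for some
`2 ≤ k ≤ n-2`, then `b_{k+1} ≤ 1`. -/
theorem statement_16 (n t : ℕ) (c : Sym2 (Fin (2 * n)) → ℕ)
    (hc : IsIntervalColoring (2 * n) t c) (k : ℕ) (hk1 : 2 ≤ k) (hk2 : k ≤ n - 2)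
    (hsat : ∑ i ∈ Finset.Icc 1 k, shiftVec n c i = 2 * k - 1) :
    shiftVec n c (k + 1) ≤ 1 := by
  have hn : 4 ≤ n := by omega
  have hn1 : 1 ≤ n := by omega
  by_contra hgoal
  push_neg at hgoal
  -- m_1 = 1
  have hm1 : (sortedMins (2 * n) c).getD 0 0 = 1 := by
    obtain ⟨v₁, hv₁⟩ := aux_exists_one hc hn1
    have hle : (sortedMins (2 * n) c).getD 0 0 ≤ 1 := by
      apply aux_getD_le (by omega)
      have hmem : v₁ ∈ (univ : Finset (Fin (2 * n))).filter
          (fun v => minColor (2 * n) c v ≤ 1) := by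
        simp [hv₁]
      have hpos := Finset.card_pos.2 ⟨v₁, hmem⟩
      omega
    obtain ⟨v, hv⟩ := aux_getD_mem (n := n) (c := c) (i := 0) (by omega)
    have := aux_s_pos hc hn1 v
    omega
  -- telescoping
  have tele : ∀ m : ℕ, 2 * m < 2 * n →
      ∑ i ∈ Finset.Icc 1 m, shiftVec n c i =
        (sortedMins (2 * n) c).getD (2 * m) 0 - (sortedMins (2 * n) c).getD 0 0 := by
    intro m
    induction m with
    | zero => intro _; simp
    | succ m ih =>
      intro hm
      rw [Finset.sum_Icc_succ_top (by omega), ih (by omega)]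
      have hsv : shiftVec n c (m + 1) =
          (sortedMins (2 * n) c).getD (2 * m + 2) 0 -
            (sortedMins (2 * n) c).getD (2 * m) 0 := by
        show (sortedMins (2 * n) c).getD (2 * (m + 1)) 0 -
            (sortedMins (2 * n) c).getD (2 * (m + 1) - 2) 0 = _
        have e1 : 2 * (m + 1) = 2 * m + 2 := by omega
        have e2 : 2 * (m + 1) - 2 = 2 * m := by omega
        rw [e1, Nat.add_sub_cancel]
      rw [hsv]
      have h1 : (sortedMins (2 * n) c).getD 0 0 ≤ (sortedMins (2 * n) c).getD (2 * m) 0 :=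
        aux_mono (by omega) (by omega)
      have h2 : (sortedMins (2 * n) c).getD (2 * m) 0 ≤
          (sortedMins (2 * n) c).getD (2 * m + 2) 0 := aux_mono (by omega) (by omega)
      have e1 : 2 * (m + 1) = 2 * m + 2 := by omega
      rw [e1]
      omega
  have hgk : (sortedMins (2 * n) c).getD (2 * k) 0 = 2 * k := by
    have htk := tele k (by omega)
    rw [hsat, hm1] at htk
    have h1 : (sortedMins (2 * n) c).getD 0 0 ≤ (sortedMins (2 * n) c).getD (2 * k) 0 :=
      aux_mono (by omega) (by omega)
    rw [hm1] at h1
    omega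
  -- the contradiction hypothesis gives m_{2k+3} ≥ 2k+2
  have hm2k3 : 2 * k + 2 ≤ (sortedMins (2 * n) c).getD (2 * k + 2) 0 := by
    have h : shiftVec n c (k + 1) =
        (sortedMins (2 * n) c).getD (2 * k + 2) 0 -
          (sortedMins (2 * n) c).getD (2 * k) 0 := by
      show (sortedMins (2 * n) c).getD (2 * (k + 1)) 0 -
          (sortedMins (2 * n) c).getD (2 * (k + 1) - 2) 0 = _
      have e1 : 2 * (k + 1) = 2 * k + 2 := by omega
      have e2 : 2 * (k + 1) - 2 = 2 * k := by omega
      rw [e1, Nat.add_sub_cancel]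
    rw [h, hgk] at hgoal
    omega
  -- the set A of vertices with small s
  have hA_ge : 2 * k + 2 ≤ ((univ : Finset (Fin (2 * n))).filter
      (fun v => minColor (2 * n) c v ≤ 2 * k + 1)).card := aux_count hc hn1 (by omega) (by omega)
  have hA_le : ((univ : Finset (Fin (2 * n))).filter
      (fun v => minColor (2 * n) c v ≤ 2 * k + 1)).card ≤ 2 * k + 2 := by
    by_contra h
    push_neg at h
    have := aux_getD_le (n := n) (c := c) (i := 2 * k + 2) (x := 2 * k + 1) (by omega) (by omega)
    omega
  set A : Finset (Fin (2 * n)) := (univ : Finset (Fin (2 * n))).filter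
    (fun v => minColor (2 * n) c v ≤ 2 * k + 1) with hA_def
  have hA : A.card = 2 * k + 2 := le_antisymm hA_le hA_ge
  have hmemA : ∀ v : Fin (2 * n), v ∈ A ↔ minColor (2 * n) c v ≤ 2 * k + 1 := by
    intro v
    rw [hA_def, Finset.mem_filter]
    simp
  -- at least two vertices of A have s ≥ 2k
  have hlow : ((univ : Finset (Fin (2 * n))).filter
      (fun v => minColor (2 * n) c v ≤ 2 * k - 1)).card ≤ 2 * k := by
    by_contra h
    push_neg at h
    have := aux_getD_le (n := n) (c := c) (i := 2 * k) (x := 2 * k - 1) (by omega) (by omega)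
    omega
  have hT2 : 1 < (A.filter (fun v => 2 * k ≤ minColor (2 * n) c v)).card := by
    have hsplit := Finset.card_filter_add_card_filter_not
      (s := A) (p := fun v => 2 * k ≤ minColor (2 * n) c v)
    have hsub2 : A.filter (fun v => ¬ 2 * k ≤ minColor (2 * n) c v) ⊆
        (univ : Finset (Fin (2 * n))).filter (fun v => minColor (2 * n) c v ≤ 2 * k - 1) := by
      intro v hv
      rw [Finset.mem_filter] at hv
      rw [Finset.mem_filter]
      exact ⟨Finset.mem_univ v, by omega⟩
    have := Finset.card_le_card hsub2
    omega
  obtain ⟨x, hx, x', hx', hxx'⟩ := Finset.one_lt_card.1 hT2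
  rw [Finset.mem_filter] at hx hx'
  have hxA : x ∈ A := hx.1
  have hx'A : x' ∈ A := hx'.1
  have hsx : 2 * k ≤ minColor (2 * n) c x := hx.2
  have hsx' : 2 * k ≤ minColor (2 * n) c x' := hx'.2
  -- the high-color neighbourhood P v inside A
  set P : Fin (2 * n) → Finset (Fin (2 * n)) :=
    fun v => (A.erase v).filter (fun u => ¬ c s(u, v) ≤ 2 * k + 1) with hP_def
  have hmemP : ∀ u v : Fin (2 * n),
      u ∈ P v ↔ (u ≠ v ∧ u ∈ A ∧ ¬ c s(u, v) ≤ 2 * k + 1) := by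
    intro u v
    rw [hP_def]
    simp only [Finset.mem_filter, Finset.mem_erase]
    tauto
  have hPcard : ∀ v ∈ A, (P v).card = minColor (2 * n) c v - 1 := by
    intro v hvA
    have hsv_le : minColor (2 * n) c v ≤ 2 * k + 1 := (hmemA v).1 hvA
    have hsv_pos : 1 ≤ minColor (2 * n) c v := aux_s_pos hc hn1 v
    have hex : ∀ i ∈ Finset.Icc (minColor (2 * n) c v) (2 * k + 1),
        ∃ u : Fin (2 * n), u ≠ v ∧ c s(u, v) = i := by
      intro i hi
      rw [Finset.mem_Icc] at hi
      exact aux_partner_exists hc hn1 hi.1 (by omega)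
    have hLowEq : (A.erase v).filter (fun u => c s(u, v) ≤ 2 * k + 1)
        = (Finset.Icc (minColor (2 * n) c v) (2 * k + 1)).image (auxPartner n c v) := by
      ext u
      simp only [Finset.mem_filter, Finset.mem_erase, Finset.mem_image]
      constructor
      · rintro ⟨⟨huv, huA⟩, hcu⟩
        refine ⟨c s(u, v), ?_, auxPartner_eq hc huv rfl⟩
        rw [Finset.mem_Icc]
        exact ⟨(aux_color_mem hc hn1 huv).1, hcu⟩
      · rintro ⟨i, hi, rfl⟩
        obtain ⟨hne, hcol⟩ := auxPartner_spec (hex i hi)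
        rw [Finset.mem_Icc] at hi
        have hsle := (aux_color_mem' hc hn1 hne).1
        rw [hcol] at hsle
        refine ⟨⟨hne, ?_⟩, by omega⟩
        rw [hmemA]
        omega
    have hinj : Set.InjOn (auxPartner n c v)
        ↑(Finset.Icc (minColor (2 * n) c v) (2 * k + 1)) := by
      intro i hi i' hi' h
      have h1 := (auxPartner_spec (hex i (by simpa using hi))).2
      have h2 := (auxPartner_spec (hex i' (by simpa using hi'))).2
      rw [h] at h1
      rw [h1] at h2
      exact h2
    have hLowCard : ((A.erase v).filter (fun u => c s(u, v) ≤ 2 * k + 1)).card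
        = 2 * k + 2 - minColor (2 * n) c v := by
      rw [hLowEq, Finset.card_image_of_injOn hinj, Nat.card_Icc]
    have hsplit := Finset.card_filter_add_card_filter_not
      (s := A.erase v) (p := fun u => c s(u, v) ≤ 2 * k + 1)
    have herase : (A.erase v).card = 2 * k + 1 := by
      rw [Finset.card_erase_of_mem hvA, hA]
      omega
    have hPv : (P v).card = (filter (fun a => ¬c s(a, v) ≤ 2 * k + 1) (A.erase v)).card := rfl
    omega
  -- symmetry of P
  have hPsym : ∀ u v : Fin (2 * n), u ∈ A → v ∈ A → (u ∈ P v ↔ v ∈ P u) := by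
    intro u v huA hvA
    rw [hmemP, hmemP]
    rw [Sym2.eq_swap (a := u) (b := v)]
    constructor
    · rintro ⟨h1, _, h3⟩; exact ⟨h1.symm, hvA, h3⟩
    · rintro ⟨h1, _, h3⟩; exact ⟨h1.symm, huA, h3⟩
  -- the set B of remaining vertices
  set B : Finset (Fin (2 * n)) := A \ {x, x'} with hB_def
  have hmemB : ∀ u : Fin (2 * n), u ∈ B ↔ (u ∈ A ∧ u ≠ x ∧ u ≠ x') := by
    intro u
    rw [hB_def, Finset.mem_sdiff]
    simp only [Finset.mem_insert, Finset.mem_singleton]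
    tauto
  have hBcard : B.card = 2 * k := by
    rw [hB_def, Finset.card_sdiff_of_subset]
    · rw [hA, Finset.card_insert_of_notMem (by simp [hxx']), Finset.card_singleton]
      omega
    · intro u hu
      simp only [Finset.mem_insert, Finset.mem_singleton] at hu
      rcases hu with rfl | rfl
      exacts [hxA, hx'A]
  -- P x ⊆ insert x' (B.filter (x ∈ P ·)), similarly for x'
  have hPsubx : ∀ y y' : Fin (2 * n), y ∈ A →
      ({y, y'} : Finset (Fin (2 * n))) = {x, x'} →
      P y ⊆ insert y' (B.filter (fun u => y ∈ P u)) := by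
    intro y y' hyA hset u hu
    have hu0 := hu
    rw [hmemP] at hu
    obtain ⟨huy, huA, hcol⟩ := hu
    rw [Finset.mem_insert]
    by_cases h : u = y'
    · left; exact h
    · right
      rw [Finset.mem_filter]
      have huB : u ∈ B := by
        rw [hmemB]
        refine ⟨huA, ?_, ?_⟩
        · intro heq
          have : u ∈ ({y, y'} : Finset (Fin (2 * n))) := by
            rw [hset]; simp [heq]
          simp only [Finset.mem_insert, Finset.mem_singleton] at this
          tauto
        · intro heq
          have : u ∈ ({y, y'} : Finset (Fin (2 * n))) := by
            rw [hset]; simp [heq]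
          simp only [Finset.mem_insert, Finset.mem_singleton] at this
          tauto
      exact ⟨huB, (hPsym u y huA hyA).1 hu0⟩
  have hcardPx : (P x).card ≤ 1 + (B.filter (fun u => x ∈ P u)).card := by
    calc (P x).card ≤ (insert x' (B.filter (fun u => x ∈ P u))).card :=
          Finset.card_le_card (hPsubx x x' hxA rfl)
      _ ≤ (B.filter (fun u => x ∈ P u)).card + 1 := Finset.card_insert_le _ _
      _ = 1 + (B.filter (fun u => x ∈ P u)).card := by omega
  have hcardPx' : (P x').card ≤ 1 + (B.filter (fun u => x' ∈ P u)).card := by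
    calc (P x').card ≤ (insert x (B.filter (fun u => x' ∈ P u))).card :=
          Finset.card_le_card (hPsubx x' x hx'A (by
            ext z; simp only [Finset.mem_insert, Finset.mem_singleton]; tauto))
      _ ≤ (B.filter (fun u => x' ∈ P u)).card + 1 := Finset.card_insert_le _ _
      _ = 1 + (B.filter (fun u => x' ∈ P u)).card := by omega
  -- pointwise bound and summation
  have hsum : (B.filter (fun u => x ∈ P u)).card + (B.filter (fun u => x' ∈ P u)).card
      ≤ ∑ u ∈ B, min (minColor (2 * n) c u - 1) 2 := by
    rw [Finset.card_filter, Finset.card_filter, ← Finset.sum_add_distrib]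
    apply Finset.sum_le_sum
    intro u huB
    have huA : u ∈ A := ((hmemB u).1 huB).1
    have hPu : (P u).card = minColor (2 * n) c u - 1 := hPcard u huA
    by_cases h1 : x ∈ P u <;> by_cases h2 : x' ∈ P u
    · have hsub : ({x, x'} : Finset (Fin (2 * n))) ⊆ P u := by
        intro z hz
        simp only [Finset.mem_insert, Finset.mem_singleton] at hz
        rcases hz with rfl | rfl
        exacts [h1, h2]
      have h2le : 2 ≤ (P u).card := by
        calc 2 = ({x, x'} : Finset (Fin (2 * n))).card := by
              rw [Finset.card_insert_of_notMem (by simp [hxx']), Finset.card_singleton]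
          _ ≤ (P u).card := Finset.card_le_card hsub
      rw [if_pos h1, if_pos h2]
      omega
    · have h1le : 1 ≤ (P u).card := Finset.card_pos.2 ⟨x, h1⟩
      rw [if_pos h1, if_neg h2]
      omega
    · have h1le : 1 ≤ (P u).card := Finset.card_pos.2 ⟨x', h2⟩
      rw [if_neg h1, if_pos h2]
      omega
    · rw [if_neg h1, if_neg h2]
      omega
  -- bounding the sum
  have ha1 : 2 ≤ ((univ : Finset (Fin (2 * n))).filter
      (fun v => minColor (2 * n) c v ≤ 1)).card := aux_count hc hn1 (by omega) (by omega)
  have ha2 : 3 ≤ ((univ : Finset (Fin (2 * n))).filter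
      (fun v => minColor (2 * n) c v ≤ 2)).card := aux_count hc hn1 (by omega) (by omega)
  have hsmall_in_B : ∀ j : ℕ, j ≤ 2 →
      (univ : Finset (Fin (2 * n))).filter (fun v => minColor (2 * n) c v ≤ j)
        ⊆ B.filter (fun v => minColor (2 * n) c v ≤ j) := by
    intro j hj v hv
    rw [Finset.mem_filter] at hv
    have hvs : minColor (2 * n) c v ≤ j := hv.2
    rw [Finset.mem_filter, hmemB]
    refine ⟨⟨(hmemA v).2 (by omega), ?_, ?_⟩, hvs⟩
    · intro heq; rw [heq] at hvs; omega
    · intro heq; rw [heq] at hvs; omega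
  have hC1 : 2 ≤ (B.filter (fun v => minColor (2 * n) c v ≤ 1)).card :=
    le_trans ha1 (Finset.card_le_card (hsmall_in_B 1 (by omega)))
  have hC2 : 3 ≤ (B.filter (fun v => minColor (2 * n) c v ≤ 2)).card :=
    le_trans ha2 (Finset.card_le_card (hsmall_in_B 2 (by omega)))
  have hsum2 : ∑ u ∈ B, min (minColor (2 * n) c u - 1) 2 ≤ 4 * k - 5 := by
    rw [← Finset.sum_filter_add_sum_filter_not B (fun v => minColor (2 * n) c v ≤ 2)]
    have hb1 : ∑ u ∈ B.filter (fun v => minColor (2 * n) c v ≤ 2),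
        min (minColor (2 * n) c u - 1) 2
        ≤ (B.filter (fun v => minColor (2 * n) c v ≤ 2)).card
          - (B.filter (fun v => minColor (2 * n) c v ≤ 1)).card := by
      rw [← Finset.sum_filter_add_sum_filter_not (B.filter (fun v => minColor (2 * n) c v ≤ 2))
        (fun v => minColor (2 * n) c v ≤ 1)]
      have e1 : (B.filter (fun v => minColor (2 * n) c v ≤ 2)).filter
          (fun v => minColor (2 * n) c v ≤ 1) = B.filter (fun v => minColor (2 * n) c v ≤ 1) := by
        rw [Finset.filter_filter]
        apply Finset.filter_congr
        intro v _
        constructor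
        · intro h; exact h.2
        · intro h; exact ⟨by omega, h⟩
      have hz : ∑ u ∈ (B.filter (fun v => minColor (2 * n) c v ≤ 2)).filter
          (fun v => minColor (2 * n) c v ≤ 1), min (minColor (2 * n) c u - 1) 2 = 0 := by
        apply Finset.sum_eq_zero
        intro u hu
        rw [Finset.mem_filter] at hu
        have := hu.2
        omega
      have ho : ∑ u ∈ (B.filter (fun v => minColor (2 * n) c v ≤ 2)).filter
          (fun v => ¬ minColor (2 * n) c v ≤ 1), min (minColor (2 * n) c u - 1) 2
          ≤ ((B.filter (fun v => minColor (2 * n) c v ≤ 2)).filter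
            (fun v => ¬ minColor (2 * n) c v ≤ 1)).card := by
        rw [Finset.card_eq_sum_ones]
        apply Finset.sum_le_sum
        intro u hu
        rw [Finset.mem_filter, Finset.mem_filter] at hu
        have h2 := hu.1.2
        omega
      have hsplit2 := Finset.card_filter_add_card_filter_not
        (s := B.filter (fun v => minColor (2 * n) c v ≤ 2))
        (p := fun v => minColor (2 * n) c v ≤ 1)
      rw [e1] at hsplit2
      rw [hz]
      omega
    have hb2 : ∑ u ∈ B.filter (fun v => ¬ minColor (2 * n) c v ≤ 2),
        min (minColor (2 * n) c u - 1) 2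
        ≤ 2 * (B.filter (fun v => ¬ minColor (2 * n) c v ≤ 2)).card := by
      rw [Finset.card_eq_sum_ones, Finset.mul_sum]
      apply Finset.sum_le_sum
      intro u _
      omega
    have hsplit3 := Finset.card_filter_add_card_filter_not
      (s := B) (p := fun v => minColor (2 * n) c v ≤ 2)
    have hle12 : (B.filter (fun v => minColor (2 * n) c v ≤ 1)).card
        ≤ (B.filter (fun v => minColor (2 * n) c v ≤ 2)).card := by
      apply Finset.card_le_card
      intro v hv
      rw [Finset.mem_filter] at hv ⊢
      exact ⟨hv.1, by omega⟩
    omega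
  -- final contradiction
  have hfin1 : (P x).card = minColor (2 * n) c x - 1 := hPcard x hxA
  have hfin2 : (P x').card = minColor (2 * n) c x' - 1 := hPcard x' hx'A
  have hfin : (minColor (2 * n) c x - 1) + (minColor (2 * n) c x' - 1) ≤ 4 * k - 3 := by
    rw [← hfin1, ← hfin2]
    omega
  omega
end

section
/- Let α be an interval t-coloring of K_{2n} with shift vector (b_1, b_2, …, b_{n-1}), and suppose that for some k with 3 ≤ k ≤ n-1 the initial segment is saturated, i.e., b_1 + b_2 + … + b_k = 2k - 1. Then b_k ≥ 3. -/
/-! ### Auxiliary machinery -/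

/-- A choice of the other endpoint of an edge at `v` with color `j` (if any). -/
noncomputable def pnr (m : ℕ) (c : Sym2 (Fin m) → ℕ) (v : Fin m) (j : ℕ) : Fin m :=
  if h : ∃ u : Fin m, u ≠ v ∧ c s(u, v) = j then h.choose else v

lemma pnr_spec {m : ℕ} {c : Sym2 (Fin m) → ℕ} {v : Fin m} {j : ℕ}
    (h : ∃ u : Fin m, u ≠ v ∧ c s(u, v) = j) :
    pnr m c v j ≠ v ∧ c s(pnr m c v j, v) = j := by
  rw [pnr, dif_pos h]; exact h.choose_spec

section
variable {m t : ℕ} {c : Sym2 (Fin m) → ℕ}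

lemma spec_eq (hc : IsIntervalColoring m t c) (hm : 2 ≤ m) (v : Fin m) :
    {k : ℕ | ∃ u : Fin m, u ≠ v ∧ c s(u, v) = k}
      = Set.Icc (minColor m c v) (minColor m c v + (m - 2)) := by
  obtain ⟨hprop, hrange, hused, hspec⟩ := hc
  obtain ⟨a, b, hab⟩ := hspec v
  have himg : (((Finset.univ.erase v).image (fun u => c s(u, v))) : Set ℕ)
      = {k : ℕ | ∃ u : Fin m, u ≠ v ∧ c s(u, v) = k} := by
    ext x
    simp only [Finset.coe_image, Set.mem_image, Finset.mem_coe, Finset.mem_erase,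
      Finset.mem_univ, and_true, Set.mem_setOf_eq]
  have hcard : ((Finset.univ.erase v).image (fun u => c s(u, v))).card = m - 1 := by
    rw [Finset.card_image_of_injOn, Finset.card_erase_of_mem (Finset.mem_univ v),
      Finset.card_univ, Fintype.card_fin]
    intro x hx y hy hxy
    by_contra hne
    have hx' : x ≠ v := Finset.ne_of_mem_erase hx
    have hy' : y ≠ v := Finset.ne_of_mem_erase hy
    apply hprop v x y (Ne.symm hx') (Ne.symm hy') hne
    rw [Sym2.eq_swap (a := v) (b := x), Sym2.eq_swap (a := v) (b := y)]
    exact hxy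
  have hfin : ((Finset.univ.erase v).image (fun u => c s(u, v))) = Finset.Icc a b := by
    apply Finset.coe_injective
    rw [himg, hab, Finset.coe_Icc]
  rw [hfin, Nat.card_Icc] at hcard
  have hle : a ≤ b := by omega
  have hmin : minColor m c v = a := by
    rw [minColor, hab]
    refine le_antisymm (Nat.sInf_le ⟨le_rfl, hle⟩) ?_
    exact (Nat.sInf_mem (⟨a, le_rfl, hle⟩ : (Set.Icc a b).Nonempty)).1
  rw [hab, hmin, show b = a + (m - 2) by omega]

lemma mem_spec (hc : IsIntervalColoring m t c) (hm : 2 ≤ m) (v : Fin m) (j : ℕ) :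
    (∃ u : Fin m, u ≠ v ∧ c s(u, v) = j)
      ↔ (minColor m c v ≤ j ∧ j ≤ minColor m c v + (m - 2)) := by
  have h := spec_eq hc hm v
  constructor
  · intro hj
    have : j ∈ {k : ℕ | ∃ u : Fin m, u ≠ v ∧ c s(u, v) = k} := hj
    rw [h] at this; exact this
  · intro hj
    have : j ∈ Set.Icc (minColor m c v) (minColor m c v + (m - 2)) := hj
    rw [← h] at this; exact this

lemma one_le_mc (hc : IsIntervalColoring m t c) (hm : 2 ≤ m) (v : Fin m) :
    1 ≤ minColor m c v := by
  obtain ⟨u, hu, hcu⟩ := (mem_spec hc hm v (minColor m c v)).mpr ⟨le_rfl, Nat.le_add_right _ _⟩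
  have := hc.2.1 u v hu
  rw [Finset.mem_Icc] at this
  omega

lemma mc_le_color (hc : IsIntervalColoring m t c) {u v : Fin m} (huv : u ≠ v) :
    minColor m c u ≤ c s(u, v) := by
  apply Nat.sInf_le
  exact ⟨v, huv.symm, by rw [Sym2.eq_swap]⟩

lemma sortedMins_length : (sortedMins m c).length = m := by
  rw [sortedMins, Multiset.length_sort, Multiset.card_map]
  simp

lemma sortedMins_sorted : (sortedMins m c).Pairwise (· ≤ ·) :=
  Multiset.pairwise_sort _ _

lemma sortedMins_getD_mono {i j : ℕ} (hij : i ≤ j) (hj : j < m) :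
    (sortedMins m c).getD i 0 ≤ (sortedMins m c).getD j 0 := by
  have hlen : (sortedMins m c).length = m := sortedMins_length
  rw [List.getD_eq_getElem _ _ (by omega), List.getD_eq_getElem _ _ (by omega)]
  have := sortedMins_sorted (m := m) (c := c) |>.rel_get_of_le
    (a := ⟨i, by omega⟩) (b := ⟨j, by omega⟩) (by exact hij)
  simpa using this

lemma mem_sortedMins {x : ℕ} (hx : x ∈ sortedMins m c) : ∃ v, minColor m c v = x := by
  rw [sortedMins, Multiset.mem_sort, Multiset.mem_map] at hx
  obtain ⟨v, _, hv⟩ := hx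
  exact ⟨v, hv⟩

lemma mc_mem_sortedMins (v : Fin m) : minColor m c v ∈ sortedMins m c := by
  rw [sortedMins, Multiset.mem_sort, Multiset.mem_map]
  exact ⟨v, Finset.mem_univ_val _, rfl⟩

lemma F_eq_countP (x : ℕ) :
    ((Finset.univ : Finset (Fin m)).filter (fun v => minColor m c v ≤ x)).card
      = (sortedMins m c).countP (fun a => decide (a ≤ x)) := by
  rw [sortedMins, ← Multiset.coe_countP, Multiset.sort_eq, Multiset.countP_map]
  rfl

lemma F_le_of_lt_getD {i x : ℕ} (h : x < (sortedMins m c).getD i 0) :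
    ((Finset.univ : Finset (Fin m)).filter (fun v => minColor m c v ≤ x)).card ≤ i := by
  set L := sortedMins m c with hL
  by_cases hi : i < L.length
  swap
  · exfalso
    rw [List.getD_eq_default _ _ (by omega)] at h
    omega
  rw [F_eq_countP, ← hL]
  set p : ℕ → Bool := fun a => decide (a ≤ x) with hp
  have hsplit : L.countP p = (L.take i).countP p + (L.drop i).countP p := by
    rw [← List.countP_append, List.take_append_drop]
  have h1 : (L.take i).countP p ≤ i := by
    refine le_trans List.countP_le_length ?_
    simp [List.length_take]
  have h2 : (L.drop i).countP p = 0 := by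
    rw [List.countP_eq_zero]
    intro a ha
    obtain ⟨j, hj, rfl⟩ := List.mem_iff_getElem.mp ha
    have hlen2 : (L.drop i).length = L.length - i := List.length_drop
    have hidx : i + j < L.length := by omega
    rw [List.getElem_drop]
    have hij : L.getD i 0 ≤ L[i + j] := by
      rw [List.getD_eq_getElem _ _ hi]
      have := sortedMins_sorted (m := m) (c := c) |>.rel_get_of_le
        (a := ⟨i, by rw [← hL]; exact hi⟩) (b := ⟨i + j, by rw [← hL]; exact hidx⟩) (by simp)
      simpa using this
    simp only [hp, decide_eq_true_eq]
    omega
  omega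

/-- The number of vertices with min-color `≤ j` is at least `j + 1`,
whenever some vertex has min-color `1` and `1 ≤ j ≤ m - 1`. -/
lemma count_lower (hc : IsIntervalColoring m t c) (hm : 2 ≤ m) {w : Fin m}
    (hw : minColor m c w = 1) {j : ℕ} (hj1 : 1 ≤ j) (hj2 : j ≤ m - 1) :
    j + 1 ≤ ((Finset.univ : Finset (Fin m)).filter (fun v => minColor m c v ≤ j)).card := by
  classical
  have hpex : ∀ jc ∈ Finset.Icc 1 j, ∃ x : Fin m, x ≠ w ∧ c s(x, w) = jc := by
    intro jc hjc
    rw [Finset.mem_Icc] at hjc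
    refine (mem_spec hc hm w jc).mpr ⟨?_, ?_⟩ <;> rw [hw] <;> omega
  have hwin : w ∈ (Finset.univ : Finset (Fin m)).filter (fun v => minColor m c v ≤ j) := by
    rw [Finset.mem_filter]; exact ⟨Finset.mem_univ _, by omega⟩
  have hmemp : ∀ jc ∈ Finset.Icc 1 j, pnr m c w jc ∈
      ((Finset.univ : Finset (Fin m)).filter (fun v => minColor m c v ≤ j)).erase w := by
    intro jc hjc
    obtain ⟨hne, hcol⟩ := pnr_spec (hpex jc hjc)
    rw [Finset.mem_Icc] at hjc
    rw [Finset.mem_erase, Finset.mem_filter]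
    exact ⟨hne, Finset.mem_univ _, le_trans (mc_le_color hc hne) (by omega)⟩
  have hinj : Set.InjOn (pnr m c w) (Finset.Icc 1 j) := by
    intro a1 h1 a2 h2 he
    have e1 := (pnr_spec (hpex a1 (Finset.mem_coe.mp h1))).2
    have e2 := (pnr_spec (hpex a2 (Finset.mem_coe.mp h2))).2
    rw [he] at e1
    omega
  have hcard := Finset.card_le_card_of_injOn (pnr m c w) hmemp hinj
  rw [Nat.card_Icc, Finset.card_erase_of_mem hwin] at hcard
  have hpos : 1 ≤ ((Finset.univ : Finset (Fin m)).filter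
      (fun v => minColor m c v ≤ j)).card := Finset.card_pos.mpr ⟨w, hwin⟩
  omega

end


/-! Small arithmetic helper lemmas (to keep `omega` contexts tiny). -/

private lemma nfact1 {k x : ℕ} (hk : 3 ≤ k) (h : 2 * k - 2 ≤ x) (h2 : x ≤ 2) : False := by
  omega

private lemma nfact2 {k j x a b : ℕ} (hk : 3 ≤ k) (h2 : x ≤ j) (h3 : j ≤ 2 * k - 1)
    (h1 : 2 * k - 2 ≤ x) (ha1 : 2 * k - 2 ≤ a) (ha2 : a ≤ 2 * k - 1)
    (hb1 : 2 * k - 2 ≤ b) (hb2 : b ≤ 2 * k - 1)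
    (hab : a ≠ b) (hja : j ≠ a) (hjb : j ≠ b) : False := by
  omega

private lemma nfact3 {k a b c : ℕ} (hk : 3 ≤ k)
    (ha1 : 2 * k - 2 ≤ a) (ha2 : a ≤ 2 * k - 1) (hb1 : 2 * k - 2 ≤ b) (hb2 : b ≤ 2 * k - 1)
    (hc1 : 2 * k - 2 ≤ c) (hc2 : c ≤ 2 * k - 1) (hab : a ≠ b) (hac : a ≠ c) (hbc : b ≠ c) :
    False := by
  omega

private lemma nfact4 {k S : ℕ} (hk : 3 ≤ k) (h1 : S ≤ 2 * k) (h2 : 2 * k ≤ S) :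
    S - 1 - 1 - 1 = 2 * k - 3 := by
  omega

private lemma nfact5 {k m j x : ℕ} (hm : 2 ≤ m) (hkm : 2 * k ≤ m - 1) (h1 : j ≤ 2 * k - 1)
    (hx : 1 ≤ x) : j ≤ x + (m - 2) := by
  omega

private lemma nfact6 {k x : ℕ} (hk : 3 ≤ k) (hx : x ≤ 2) (h : 2 * k - 1 + 1 - x ≤ 2 * k - 3) :
    False := by
  omega

private lemma nfact7 {A B C : ℕ} (h1 : A - B ≤ C) (h2 : B ≤ 2) (h3 : 3 ≤ A) : 0 < C := by
  omega

section
variable {m t : ℕ} {c : Sym2 (Fin m) → ℕ}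

/-- If some vertex has min-color 1 and there are at most `J + 1` vertices of
min-color `≤ J`, then every edge from such a vertex to a min-1 vertex has
color at most `J`. -/
lemma color_bound (hc : IsIntervalColoring m t c) (hm : 2 ≤ m) {w : Fin m}
    (hw : minColor m c w = 1) {J : ℕ} (hJ1 : 1 ≤ J) (hJ2 : J ≤ m - 1)
    (hcard : ((Finset.univ : Finset (Fin m)).filter
      (fun v => minColor m c v ≤ J)).card ≤ J + 1)
    {u : Fin m} (hu : minColor m c u ≤ J) (hune : u ≠ w) :
    c s(u, w) ≤ J := by
  classical
  have hwin : w ∈ (Finset.univ : Finset (Fin m)).filter (fun v => minColor m c v ≤ J) := by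
    rw [Finset.mem_filter]; exact ⟨Finset.mem_univ _, by omega⟩
  have hpex : ∀ jc ∈ Finset.Icc 1 J, ∃ x : Fin m, x ≠ w ∧ c s(x, w) = jc := by
    intro jc hjc
    rw [Finset.mem_Icc] at hjc
    refine (mem_spec hc hm w jc).mpr ⟨?_, ?_⟩ <;> rw [hw] <;> omega
  have hmemp : ∀ jc ∈ Finset.Icc 1 J, pnr m c w jc ∈
      ((Finset.univ : Finset (Fin m)).filter (fun v => minColor m c v ≤ J)).erase w := by
    intro jc hjc
    obtain ⟨hne, hcol⟩ := pnr_spec (hpex jc hjc)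
    rw [Finset.mem_Icc] at hjc
    rw [Finset.mem_erase, Finset.mem_filter]
    exact ⟨hne, Finset.mem_univ _, le_trans (mc_le_color hc hne) (by omega)⟩
  have hinj : ∀ (a₁ a₂ : ℕ) (ha₁ : a₁ ∈ Finset.Icc 1 J) (ha₂ : a₂ ∈ Finset.Icc 1 J),
      pnr m c w a₁ = pnr m c w a₂ → a₁ = a₂ := by
    intro a1 a2 h1 h2 he
    have e1 := (pnr_spec (hpex a1 h1)).2
    have e2 := (pnr_spec (hpex a2 h2)).2
    rw [he] at e1
    exact e1.symm.trans e2
  have hcardle : (((Finset.univ : Finset (Fin m)).filter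
      (fun v => minColor m c v ≤ J)).erase w).card ≤ (Finset.Icc 1 J).card := by
    rw [Finset.card_erase_of_mem hwin, Nat.card_Icc]
    omega
  obtain ⟨jc, hjc, hueq⟩ := Finset.surj_on_of_inj_on_of_card_le
    (fun jc _ => pnr m c w jc) hmemp hinj hcardle u
    (by rw [Finset.mem_erase, Finset.mem_filter]
        exact ⟨hune, Finset.mem_univ _, hu⟩)
  have := (pnr_spec (hpex jc hjc)).2
  rw [← hueq] at this
  rw [this]
  rw [Finset.mem_Icc] at hjc
  exact hjc.2

/-- At most two vertices can have min-color in `[2k-2, 2k-1]`. -/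
lemma pair_bound (hc : IsIntervalColoring m t c) {k : ℕ} (hk1 : 3 ≤ k)
    {w1 : Fin m} (hmw1 : minColor m c w1 = 1)
    (hcol : ∀ u : Fin m, minColor m c u ≤ 2 * k - 1 → u ≠ w1 → c s(u, w1) ≤ 2 * k - 1) :
    ((Finset.univ : Finset (Fin m)).filter
      (fun v => 2 * k - 2 ≤ minColor m c v ∧ minColor m c v ≤ 2 * k - 1)).card ≤ 2 := by
  classical
  by_contra h'
  push_neg at h'
  obtain ⟨u1, u2, u3, h1, h2, h3, h12, h13, h23⟩ := Finset.two_lt_card_iff.mp h'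
  rw [Finset.mem_filter] at h1 h2 h3
  obtain ⟨-, hm1, hM1⟩ := h1
  obtain ⟨-, hm2, hM2⟩ := h2
  obtain ⟨-, hm3, hM3⟩ := h3
  have hn1 : u1 ≠ w1 := by
    intro e; rw [e, hmw1] at hm1; exact absurd hm1 (by omega)
  have hn2 : u2 ≠ w1 := by
    intro e; rw [e, hmw1] at hm2; exact absurd hm2 (by omega)
  have hn3 : u3 ≠ w1 := by
    intro e; rw [e, hmw1] at hm3; exact absurd hm3 (by omega)
  have hl1 : 2 * k - 2 ≤ c s(u1, w1) := le_trans hm1 (mc_le_color hc hn1)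
  have hl2 : 2 * k - 2 ≤ c s(u2, w1) := le_trans hm2 (mc_le_color hc hn2)
  have hl3 : 2 * k - 2 ≤ c s(u3, w1) := le_trans hm3 (mc_le_color hc hn3)
  have hr1 : c s(u1, w1) ≤ 2 * k - 1 := hcol u1 hM1 hn1
  have hr2 : c s(u2, w1) ≤ 2 * k - 1 := hcol u2 hM2 hn2
  have hr3 : c s(u3, w1) ≤ 2 * k - 1 := hcol u3 hM3 hn3
  have d12 : c s(u1, w1) ≠ c s(u2, w1) := by
    have := hc.1 w1 u1 u2 (Ne.symm hn1) (Ne.symm hn2) h12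
    rw [Sym2.eq_swap (a := w1) (b := u1), Sym2.eq_swap (a := w1) (b := u2)] at this
    exact this
  have d13 : c s(u1, w1) ≠ c s(u3, w1) := by
    have := hc.1 w1 u1 u3 (Ne.symm hn1) (Ne.symm hn3) h13
    rw [Sym2.eq_swap (a := w1) (b := u1), Sym2.eq_swap (a := w1) (b := u3)] at this
    exact this
  have d23 : c s(u2, w1) ≠ c s(u3, w1) := by
    have := hc.1 w1 u2 u3 (Ne.symm hn2) (Ne.symm hn3) h23
    rw [Sym2.eq_swap (a := w1) (b := u2), Sym2.eq_swap (a := w1) (b := u3)] at this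
    exact this
  exact nfact3 hk1 hl1 hr1 hl2 hr2 hl3 hr3 d12 d13 d23

set_option maxHeartbeats 1000000 in
/-- The main combinatorial contradiction. -/
lemma saturated_contradiction (hc : IsIntervalColoring m t c) (hm : 2 ≤ m)
    {k : ℕ} (hk1 : 3 ≤ k) (hkm : 2 * k ≤ m - 1)
    {w1 w2 : Fin m} (hw12 : w1 ≠ w2)
    (hmw1 : minColor m c w1 = 1) (hmw2 : minColor m c w2 = 1)
    (hF2 : 3 ≤ ((Finset.univ : Finset (Fin m)).filter
      (fun v => minColor m c v ≤ 2)).card)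
    (hF2k3 : ((Finset.univ : Finset (Fin m)).filter
      (fun v => minColor m c v ≤ 2 * k - 3)).card ≤ 2 * k - 2)
    (hFle : ((Finset.univ : Finset (Fin m)).filter
      (fun v => minColor m c v ≤ 2 * k - 1)).card ≤ 2 * k)
    (hFge : 2 * k ≤ ((Finset.univ : Finset (Fin m)).filter
      (fun v => minColor m c v ≤ 2 * k - 1)).card) : False := by
  classical
  have hcol : ∀ u : Fin m, minColor m c u ≤ 2 * k - 1 →
      ∀ w : Fin m, minColor m c w = 1 → u ≠ w → c s(u, w) ≤ 2 * k - 1 := by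
    intro u hu w hw hne
    exact color_bound hc hm hw (by omega) (by omega) (by omega) hu hne
  -- the set of vertices with min-color in [2k-2, 2k-1] has exactly two elements
  have hUle := pair_bound hc hk1 hmw1 (fun u hu hne => hcol u hu w1 hmw1 hne)
  have hUge : 2 ≤ ((Finset.univ : Finset (Fin m)).filter
      (fun v => 2 * k - 2 ≤ minColor m c v ∧ minColor m c v ≤ 2 * k - 1)).card := by
    have hsub : (Finset.univ : Finset (Fin m)).filter (fun v => minColor m c v ≤ 2 * k - 1)
        ⊆ ((Finset.univ : Finset (Fin m)).filter (fun v => minColor m c v ≤ 2 * k - 3))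
          ∪ ((Finset.univ : Finset (Fin m)).filter
            (fun v => 2 * k - 2 ≤ minColor m c v ∧ minColor m c v ≤ 2 * k - 1)) := by
      intro x hx
      rw [Finset.mem_filter] at hx
      rw [Finset.mem_union, Finset.mem_filter, Finset.mem_filter]
      rcases le_or_gt (minColor m c x) (2 * k - 3) with h | h
      · exact Or.inl ⟨Finset.mem_univ _, h⟩
      · exact Or.inr ⟨Finset.mem_univ _, by omega, hx.2⟩
    have := le_trans (Finset.card_le_card hsub) (Finset.card_union_le _ _)
    omega
  obtain ⟨u, u', huu', hUeq⟩ := Finset.card_eq_two.mp (le_antisymm hUle hUge)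
  have huU : u ∈ (Finset.univ : Finset (Fin m)).filter
      (fun v => 2 * k - 2 ≤ minColor m c v ∧ minColor m c v ≤ 2 * k - 1) := by
    rw [hUeq]; simp
  have hu'U : u' ∈ (Finset.univ : Finset (Fin m)).filter
      (fun v => 2 * k - 2 ≤ minColor m c v ∧ minColor m c v ≤ 2 * k - 1) := by
    rw [hUeq]; simp
  rw [Finset.mem_filter] at huU hu'U
  obtain ⟨-, hmu1, hmu2⟩ := huU
  obtain ⟨-, hmu'1, hmu'2⟩ := hu'U
  -- colors from u, u' to w1, w2
  have huw1 : u ≠ w1 := by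
    intro e; rw [e, hmw1] at hmu1; exact absurd (nfact1 hk1 hmu1 (Nat.le_succ 1)) not_false
  have huw2 : u ≠ w2 := by
    intro e; rw [e, hmw2] at hmu1; exact absurd (nfact1 hk1 hmu1 (Nat.le_succ 1)) not_false
  have hu'w1 : u' ≠ w1 := by
    intro e; rw [e, hmw1] at hmu'1; exact absurd (nfact1 hk1 hmu'1 (Nat.le_succ 1)) not_false
  have hu'w2 : u' ≠ w2 := by
    intro e; rw [e, hmw2] at hmu'1; exact absurd (nfact1 hk1 hmu'1 (Nat.le_succ 1)) not_false
  have ha1l : 2 * k - 2 ≤ c s(u, w1) := le_trans hmu1 (mc_le_color hc huw1)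
  have ha2l : 2 * k - 2 ≤ c s(u, w2) := le_trans hmu1 (mc_le_color hc huw2)
  have hb1l : 2 * k - 2 ≤ c s(u', w1) := le_trans hmu'1 (mc_le_color hc hu'w1)
  have hb2l : 2 * k - 2 ≤ c s(u', w2) := le_trans hmu'1 (mc_le_color hc hu'w2)
  have ha1r : c s(u, w1) ≤ 2 * k - 1 := hcol u hmu2 w1 hmw1 huw1
  have ha2r : c s(u, w2) ≤ 2 * k - 1 := hcol u hmu2 w2 hmw2 huw2
  have hb1r : c s(u', w1) ≤ 2 * k - 1 := hcol u' hmu'2 w1 hmw1 hu'w1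
  have hb2r : c s(u', w2) ≤ 2 * k - 1 := hcol u' hmu'2 w2 hmw2 hu'w2
  have hane : c s(u, w1) ≠ c s(u, w2) := hc.1 u w1 w2 huw1 huw2 hw12
  have hbne : c s(u', w1) ≠ c s(u', w2) := hc.1 u' w1 w2 hu'w1 hu'w2 hw12
  -- a third vertex with min-color ≤ 2
  obtain ⟨v3, hv3m, hv3w1, hv3w2⟩ :
      ∃ v3 : Fin m, minColor m c v3 ≤ 2 ∧ v3 ≠ w1 ∧ v3 ≠ w2 := by
    have h1 := Finset.le_card_sdiff ({w1, w2} : Finset (Fin m))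
      ((Finset.univ : Finset (Fin m)).filter (fun v => minColor m c v ≤ 2))
    have h2 : ({w1, w2} : Finset (Fin m)).card ≤ 2 := by
      refine le_trans (Finset.card_insert_le _ _) ?_
      simp
    have hpos : 0 < (((Finset.univ : Finset (Fin m)).filter
        (fun v => minColor m c v ≤ 2)) \ {w1, w2}).card := nfact7 h1 h2 hF2
    obtain ⟨v3, hv3⟩ := Finset.card_pos.mp hpos
    rw [Finset.mem_sdiff, Finset.mem_filter] at hv3
    refine ⟨v3, hv3.1.2, ?_, ?_⟩ <;> intro e <;> apply hv3.2 <;> simp [e]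
  have hv3u : v3 ≠ u := by
    intro e; rw [← e] at hmu1; exact absurd (nfact1 hk1 hmu1 hv3m) not_false
  have hv3u' : v3 ≠ u' := by
    intro e; rw [← e] at hmu'1; exact absurd (nfact1 hk1 hmu'1 hv3m) not_false
  -- target set and the final injection
  have hv3S : v3 ∈ (Finset.univ : Finset (Fin m)).filter
      (fun v => minColor m c v ≤ 2 * k - 1) := by
    rw [Finset.mem_filter]; exact ⟨Finset.mem_univ _, by omega⟩
  have huS : u ∈ (Finset.univ : Finset (Fin m)).filter
      (fun v => minColor m c v ≤ 2 * k - 1) := by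
    rw [Finset.mem_filter]; exact ⟨Finset.mem_univ _, hmu2⟩
  have hu'S : u' ∈ (Finset.univ : Finset (Fin m)).filter
      (fun v => minColor m c v ≤ 2 * k - 1) := by
    rw [Finset.mem_filter]; exact ⟨Finset.mem_univ _, hmu'2⟩
  have hTcard : (((((Finset.univ : Finset (Fin m)).filter
      (fun v => minColor m c v ≤ 2 * k - 1)).erase v3).erase u).erase u').card
        = 2 * k - 3 := by
    have h2 : u ∈ (((Finset.univ : Finset (Fin m)).filter
        (fun v => minColor m c v ≤ 2 * k - 1)).erase v3) :=
      Finset.mem_erase.mpr ⟨Ne.symm hv3u, huS⟩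
    have h3 : u' ∈ ((((Finset.univ : Finset (Fin m)).filter
        (fun v => minColor m c v ≤ 2 * k - 1)).erase v3).erase u) :=
      Finset.mem_erase.mpr ⟨Ne.symm huu', Finset.mem_erase.mpr ⟨Ne.symm hv3u', hu'S⟩⟩
    rw [Finset.card_erase_of_mem h3, Finset.card_erase_of_mem h2,
      Finset.card_erase_of_mem hv3S]
    exact nfact4 hk1 hFle hFge
  have hmcv3_1 := one_le_mc hc hm v3
  have hpex3 : ∀ j ∈ Finset.Icc (minColor m c v3) (2 * k - 1),
      ∃ x : Fin m, x ≠ v3 ∧ c s(x, v3) = j := by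
    intro j hj
    rw [Finset.mem_Icc] at hj
    exact (mem_spec hc hm v3 j).mpr ⟨hj.1, nfact5 hm hkm hj.2 hmcv3_1⟩
  have hmemp3 : ∀ j ∈ Finset.Icc (minColor m c v3) (2 * k - 1),
      pnr m c v3 j ∈ ((((Finset.univ : Finset (Fin m)).filter
        (fun v => minColor m c v ≤ 2 * k - 1)).erase v3).erase u).erase u' := by
    intro j hj
    obtain ⟨hne, hcolj⟩ := pnr_spec (hpex3 j hj)
    rw [Finset.mem_Icc] at hj
    have hpS : minColor m c (pnr m c v3 j) ≤ 2 * k - 1 :=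
      le_trans (mc_le_color hc hne) (by rw [hcolj]; exact hj.2)
    have hpu : pnr m c v3 j ≠ u := by
      intro e
      rw [e] at hcolj
      have huv3 : u ≠ v3 := Ne.symm hv3u
      have hj1 : minColor m c u ≤ j := by
        rw [← hcolj]
        exact mc_le_color hc huv3
      have d1 : c s(u, v3) ≠ c s(u, w1) := hc.1 u v3 w1 huv3 huw1 hv3w1
      have d2 : c s(u, v3) ≠ c s(u, w2) := hc.1 u v3 w2 huv3 huw2 hv3w2
      exact nfact2 hk1 hj1 hj.2 hmu1 ha1l ha1r ha2l ha2r hane (hcolj ▸ d1) (hcolj ▸ d2)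
    have hpu' : pnr m c v3 j ≠ u' := by
      intro e
      rw [e] at hcolj
      have hu'v3 : u' ≠ v3 := Ne.symm hv3u'
      have hj1 : minColor m c u' ≤ j := by
        rw [← hcolj]
        exact mc_le_color hc hu'v3
      have d1 : c s(u', v3) ≠ c s(u', w1) := hc.1 u' v3 w1 hu'v3 hu'w1 hv3w1
      have d2 : c s(u', v3) ≠ c s(u', w2) := hc.1 u' v3 w2 hu'v3 hu'w2 hv3w2
      exact nfact2 hk1 hj1 hj.2 hmu'1 hb1l hb1r hb2l hb2r hbne (hcolj ▸ d1) (hcolj ▸ d2)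
    rw [Finset.mem_erase, Finset.mem_erase, Finset.mem_erase, Finset.mem_filter]
    exact ⟨hpu', hpu, hne, Finset.mem_univ _, hpS⟩
  have hinj3 : Set.InjOn (pnr m c v3)
      (Finset.Icc (minColor m c v3) (2 * k - 1)) := by
    intro a1 h1 a2 h2 he
    have e1 := (pnr_spec (hpex3 a1 (Finset.mem_coe.mp h1))).2
    have e2 := (pnr_spec (hpex3 a2 (Finset.mem_coe.mp h2))).2
    rw [he] at e1
    exact e1.symm.trans e2
  have hfinal := Finset.card_le_card_of_injOn (pnr m c v3) hmemp3 hinj3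
  rw [Nat.card_Icc, hTcard] at hfinal
  exact nfact6 hk1 hv3m hfinal

end

/-- If the initial segment `(b_1,…,b_k)` of the shift vector of an interval
coloring of `K_{2n}` is saturated (`b_1 + ⋯ + b_k = 2k - 1`) for some
`3 ≤ k ≤ n-1`, then `b_k ≥ 3`. -/
theorem statement_17 (n t : ℕ) (c : Sym2 (Fin (2 * n)) → ℕ)
    (hc : IsIntervalColoring (2 * n) t c) (k : ℕ) (hk1 : 3 ≤ k) (hk2 : k ≤ n - 1)
    (hsat : ∑ i ∈ Finset.Icc 1 k, shiftVec n c i = 2 * k - 1) :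
    3 ≤ shiftVec n c k := by
  classical
  have hn : 4 ≤ n := by omega
  have hm : 2 ≤ 2 * n := by omega
  have hlen : (sortedMins (2 * n) c).length = 2 * n := sortedMins_length
  -- two vertices of min-color 1
  obtain ⟨w1, w2, hw12, hmw1, hmw2⟩ :
      ∃ w1 w2 : Fin (2 * n), w1 ≠ w2 ∧ minColor (2 * n) c w1 = 1 ∧ minColor (2 * n) c w2 = 1 := by
    have h01 : (⟨0, by omega⟩ : Fin (2 * n)) ≠ ⟨1, by omega⟩ := by
      simp [Fin.ext_iff]
    have ht1 : 1 ≤ t := by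
      have := hc.2.1 _ _ h01
      rw [Finset.mem_Icc] at this; omega
    obtain ⟨u, v, huv, hcuv⟩ := hc.2.2.1 1 le_rfl ht1
    have h1u : minColor (2 * n) c u ≤ 1 :=
      Nat.sInf_le ⟨v, huv.symm, by rw [Sym2.eq_swap]; exact hcuv⟩
    have h1v : minColor (2 * n) c v ≤ 1 := Nat.sInf_le ⟨u, huv, hcuv⟩
    have hu1 := one_le_mc hc hm u
    have hv1 := one_le_mc hc hm v
    exact ⟨u, v, huv, by omega, by omega⟩
  -- first sorted entry equals 1
  have hg0 : (sortedMins (2 * n) c).getD 0 0 = 1 := by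
    have hle : (sortedMins (2 * n) c).getD 0 0 ≤ 1 := by
      obtain ⟨i, hi, hval⟩ := List.mem_iff_getElem.mp (mc_mem_sortedMins (c := c) w1)
      have hmono := sortedMins_getD_mono (m := 2 * n) (c := c) (i := 0) (j := i)
        (Nat.zero_le _) (by omega)
      have h2 : (sortedMins (2 * n) c).getD i 0 = 1 := by
        rw [List.getD_eq_getElem _ _ hi, hval, hmw1]
      omega
    have hge : 1 ≤ (sortedMins (2 * n) c).getD 0 0 := by
      rw [List.getD_eq_getElem _ _ (by omega)]
      obtain ⟨v, hv⟩ := mem_sortedMins (List.getElem_mem _)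
      rw [← hv]
      exact one_le_mc hc hm v
    omega
  -- telescoping
  have htel : ∀ K : ℕ, 2 * K < 2 * n →
      ∑ i ∈ Finset.Icc 1 K, shiftVec n c i
        = (sortedMins (2 * n) c).getD (2 * K) 0 - (sortedMins (2 * n) c).getD 0 0 := by
    intro K
    induction K with
    | zero => intro _; simp
    | succ K ih =>
      intro hK
      rw [Finset.sum_Icc_succ_top (by omega), ih (by omega)]
      have e : shiftVec n c (K + 1) = (sortedMins (2 * n) c).getD (2 * (K + 1)) 0
          - (sortedMins (2 * n) c).getD (2 * (K + 1) - 2) 0 := rfl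
      rw [e, show 2 * (K + 1) - 2 = 2 * K by omega]
      have m1 : (sortedMins (2 * n) c).getD 0 0 ≤ (sortedMins (2 * n) c).getD (2 * K) 0 :=
        sortedMins_getD_mono (by omega) (by omega)
      have m2 : (sortedMins (2 * n) c).getD (2 * K) 0
          ≤ (sortedMins (2 * n) c).getD (2 * (K + 1)) 0 :=
        sortedMins_getD_mono (by omega) (by omega)
      omega
  have hsat' := htel k (by omega)
  rw [hsat, hg0] at hsat'
  have hg2k_ge : 1 ≤ (sortedMins (2 * n) c).getD (2 * k) 0 := by
    have := sortedMins_getD_mono (m := 2 * n) (c := c) (i := 0) (j := 2 * k)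
      (Nat.zero_le _) (by omega)
    omega
  have hg2k : (sortedMins (2 * n) c).getD (2 * k) 0 = 2 * k := by omega
  -- assume for contradiction that b_k ≤ 2
  by_contra hlt
  push_neg at hlt
  have hbk : shiftVec n c k = (sortedMins (2 * n) c).getD (2 * k) 0
      - (sortedMins (2 * n) c).getD (2 * k - 2) 0 := rfl
  have hmono2 : (sortedMins (2 * n) c).getD (2 * k - 2) 0
      ≤ (sortedMins (2 * n) c).getD (2 * k) 0 :=
    sortedMins_getD_mono (by omega) (by omega)
  have hg2k2 : 2 * k - 2 ≤ (sortedMins (2 * n) c).getD (2 * k - 2) 0 := by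
    rw [hbk, hg2k] at hlt
    omega
  -- counting bounds
  have hF2k3 : ((Finset.univ : Finset (Fin (2 * n))).filter
      (fun v => minColor (2 * n) c v ≤ 2 * k - 3)).card ≤ 2 * k - 2 :=
    F_le_of_lt_getD (by omega)
  have hFle : ((Finset.univ : Finset (Fin (2 * n))).filter
      (fun v => minColor (2 * n) c v ≤ 2 * k - 1)).card ≤ 2 * k :=
    F_le_of_lt_getD (by omega)
  have hFge : 2 * k ≤ ((Finset.univ : Finset (Fin (2 * n))).filter
      (fun v => minColor (2 * n) c v ≤ 2 * k - 1)).card := by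
    have := count_lower hc hm hmw1 (j := 2 * k - 1) (by omega) (by omega)
    omega
  have hF2 : 3 ≤ ((Finset.univ : Finset (Fin (2 * n))).filter
      (fun v => minColor (2 * n) c v ≤ 2)).card := by
    have := count_lower hc hm hmw1 (j := 2) (by omega) (by omega)
    omega
  exact saturated_contradiction hc hm hk1 (by omega) hw12 hmw1 hmw2 hF2 hF2k3 hFle hFge
end
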